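/- arXiv:1911.02146 — 3 statements merged into one kernel-verified Lean document; each statement's English description precedes it below -/
import Mathlib

section
/- Let ε > 0 and let D_1,…,D_n be probability distributions on [0,H]. For each i, let D̃_i be D_i shifted right by ε (i.e., the distribution with CDF F_{D̃_i}(x) = F_{D_i}(x−ε)) and let D̰_i be D_i shifted left by ε (CDF F_{D̰_i}(x) = F_{D_i}(x+ε)). Then for every DSIC and IR single-item mechanism M there exists a DSIC and IR single-item mechanism M' such that Rev(M', ×_{i=1}^n D̰_i) ≥ Rev(M, ×_{i=1}^n D̃_i) − 2ε. In particular, OPT(×_i D̰_i) ≥ OPT(×_i D̃_i) − 2ε. -/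
open MeasureTheory Set

namespace SingleItem

/-- A single-item mechanism for `n` bidders: (expected) allocation probabilities and
(expected) payments on each bid profile. -/
structure Mech (n : ℕ) where
  alloc : (Fin n → ℝ) → Fin n → ℝ
  pay : (Fin n → ℝ) → Fin n → ℝ
  alloc_nonneg : ∀ b i, 0 ≤ alloc b i
  alloc_sum_le_one : ∀ b, ∑ i, alloc b i ≤ 1
  meas_alloc : ∀ i, Measurable fun b => alloc b i
  meas_pay : ∀ i, Measurable fun b => pay b i

/-- Utility of bidder `i` with value `vi` when the bid profile is `b`. -/
def util {n : ℕ} (M : Mech n) (i : Fin n) (vi : ℝ) (b : Fin n → ℝ) : ℝ :=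
  vi * M.alloc b i - M.pay b i

/-- Dominant-strategy incentive compatibility. -/
def DSIC {n : ℕ} (M : Mech n) : Prop :=
  ∀ (i : Fin n) (v : Fin n → ℝ) (v' : ℝ),
    util M i (v i) (Function.update v i v') ≤ util M i (v i) v

/-- (Ex-post) individual rationality. -/
def IR {n : ℕ} (M : Mech n) : Prop :=
  ∀ (i : Fin n) (v : Fin n → ℝ), 0 ≤ util M i (v i) v

/-- Expected revenue of a mechanism under (truthful) bids drawn from `D`. -/
noncomputable def Rev {n : ℕ} (M : Mech n) (D : Measure (Fin n → ℝ)) : ℝ :=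
  ∫ b, (∑ i, M.pay b i) ∂D

/-- Optimal revenue over DSIC and IR mechanisms. -/
noncomputable def OPT {n : ℕ} (D : Measure (Fin n → ℝ)) : ℝ :=
  sSup {r | ∃ M : Mech n, DSIC M ∧ IR M ∧ r = Rev M D}

/-- The Lévy distance between `P` and `Q` is at most `ε`. -/
def LevyLe (P Q : Measure ℝ) (ε : ℝ) : Prop :=
  ∀ x : ℝ, (P (Iic (x - ε))).toReal - ε ≤ (Q (Iic x)).toReal ∧
    (Q (Iic x)).toReal ≤ (P (Iic (x + ε))).toReal + ε

/-- The Kolmogorov distance between `P` and `Q` is at most `ε`. -/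
def KolmogorovLe (P Q : Measure ℝ) (ε : ℝ) : Prop :=
  ∀ x : ℝ, |(P (Iic x)).toReal - (Q (Iic x)).toReal| ≤ ε

end SingleItem

open SingleItem

section Aux

variable {n : ℕ}

private lemma meas_shiftFn (n : ℕ) (c : ℝ) :
    Measurable fun b : Fin n → ℝ => fun j => b j + c :=
  measurable_pi_lambda _ fun j => by fun_prop

/-- Shift a mechanism: run `M` on bids shifted up by `c`, adjusting payments so that
utilities match those of value `v + c` in `M`. -/
noncomputable def shiftMech (M : Mech n) (c : ℝ) : Mech n where
  alloc b i := M.alloc (fun j => b j + c) i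
  pay b i := M.pay (fun j => b j + c) i - c * M.alloc (fun j => b j + c) i
  alloc_nonneg b i := M.alloc_nonneg _ i
  alloc_sum_le_one b := M.alloc_sum_le_one _
  meas_alloc i := (M.meas_alloc i).comp (meas_shiftFn n c)
  meas_pay i := ((M.meas_pay i).comp (meas_shiftFn n c)).sub
    (((M.meas_alloc i).comp (meas_shiftFn n c)).const_mul c)

lemma util_shift (M : Mech n) (c : ℝ) (i : Fin n) (vi : ℝ) (b : Fin n → ℝ) :
    util (shiftMech M c) i vi b = util M i (vi + c) (fun j => b j + c) := by
  simp only [util, shiftMech]; ring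

lemma shift_DSIC {M : Mech n} (hM : DSIC M) (c : ℝ) : DSIC (shiftMech M c) := by
  intro i v v'
  rw [util_shift, util_shift]
  have hupd : (fun j => Function.update v i v' j + c)
      = Function.update (fun j => v j + c) i (v' + c) := by
    ext j
    rcases eq_or_ne j i with rfl | hj
    · simp
    · simp [Function.update_of_ne hj]
  have := hM i (fun j => v j + c) (v' + c)
  simpa [hupd] using this

lemma shift_IR {M : Mech n} (hM : IR M) (c : ℝ) : IR (shiftMech M c) := by
  intro i v
  rw [util_shift]
  simpa using hM i (fun j => v j + c)

lemma integrable_sum_alloc (M : Mech n) (ν : Measure (Fin n → ℝ)) [IsProbabilityMeasure ν] :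
    Integrable (fun b => ∑ i, M.alloc b i) ν := by
  refine (integrable_const (1 : ℝ)).mono' ?_ ?_
  · exact (Finset.measurable_sum _ fun i _ => M.meas_alloc i).aestronglyMeasurable
  · refine Filter.Eventually.of_forall fun b => ?_
    rw [Real.norm_eq_abs, abs_of_nonneg (Finset.sum_nonneg fun i _ => M.alloc_nonneg b i)]
    exact M.alloc_sum_le_one b

lemma rev_shift (M : Mech n) (c : ℝ) (ν : Measure (Fin n → ℝ)) :
    Rev (shiftMech M c) ν
      = ∫ b, ((∑ i, M.pay b i) - c * ∑ i, M.alloc b i)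
          ∂(ν.map (fun b => fun j => b j + c)) := by
  rw [Rev, integral_map (meas_shiftFn n c).aemeasurable]
  · congr 1
    ext b
    simp only [shiftMech, Finset.sum_sub_distrib, ← Finset.mul_sum]
  · exact (((Finset.measurable_sum Finset.univ fun i _ => M.meas_pay i).sub
      ((Finset.measurable_sum Finset.univ fun i _ => M.meas_alloc i).const_mul c))).aestronglyMeasurable

/-- Key revenue comparison for the shifted mechanism. -/
lemma rev_shift_ge (M : Mech n) (c : ℝ) (hc : 0 ≤ c) (ν : Measure (Fin n → ℝ))
    [IsProbabilityMeasure ν] :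
    Rev M (ν.map (fun b => fun j => b j + c)) - c ≤ Rev (shiftMech M c) ν := by
  have hmap : IsProbabilityMeasure (ν.map (fun b : Fin n → ℝ => fun j => b j + c)) :=
    Measure.isProbabilityMeasure_map (meas_shiftFn n c).aemeasurable
  set μ := ν.map (fun b : Fin n → ℝ => fun j => b j + c)
  rw [rev_shift]
  by_cases hInt : Integrable (fun b => ∑ i, M.pay b i) μ
  · have hA := integrable_sum_alloc M μ
    rw [integral_sub hInt (hA.const_mul c), integral_const_mul]
    have h1 : ∫ b, (∑ i, M.alloc b i) ∂μ ≤ 1 := by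
      calc ∫ b, (∑ i, M.alloc b i) ∂μ ≤ ∫ _, (1 : ℝ) ∂μ :=
            integral_mono hA (integrable_const 1) fun b => M.alloc_sum_le_one b
        _ = 1 := by simp
    have h0 : 0 ≤ ∫ b, (∑ i, M.alloc b i) ∂μ :=
      integral_nonneg fun b => Finset.sum_nonneg fun i _ => M.alloc_nonneg b i
    have : c * ∫ b, (∑ i, M.alloc b i) ∂μ ≤ c * 1 := by
      exact mul_le_mul_of_nonneg_left h1 hc
    rw [Rev]
    linarith
  · have hInt2 : ¬ Integrable (fun b => (∑ i, M.pay b i) - c * ∑ i, M.alloc b i) μ := by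
      intro h
      have h2 := h.add ((integrable_sum_alloc M μ).const_mul c)
      apply hInt
      have heq : (fun b => ∑ i, M.pay b i)
          = (fun b => (∑ i, M.pay b i) - c * ∑ i, M.alloc b i)
            + (fun b => c * ∑ i, M.alloc b i) := by
        funext b; simp only [Pi.add_apply]; ring
      rw [heq]; exact h2
    rw [Rev, integral_undef hInt, integral_undef hInt2]
    linarith

/-- The upward shift direction: revenue doesn't go down when shifting the mechanism down. -/
lemma rev_shift_ge' (M : Mech n) (c : ℝ) (hc : c ≤ 0) (ν : Measure (Fin n → ℝ))
    [IsProbabilityMeasure ν] :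
    Rev M (ν.map (fun b => fun j => b j + c)) ≤ Rev (shiftMech M c) ν := by
  have hmap : IsProbabilityMeasure (ν.map (fun b : Fin n → ℝ => fun j => b j + c)) :=
    Measure.isProbabilityMeasure_map (meas_shiftFn n c).aemeasurable
  set μ := ν.map (fun b : Fin n → ℝ => fun j => b j + c)
  rw [rev_shift]
  by_cases hInt : Integrable (fun b => ∑ i, M.pay b i) μ
  · have hA := integrable_sum_alloc M μ
    rw [integral_sub hInt (hA.const_mul c), integral_const_mul]
    have h0 : 0 ≤ ∫ b, (∑ i, M.alloc b i) ∂μ :=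
      integral_nonneg fun b => Finset.sum_nonneg fun i _ => M.alloc_nonneg b i
    have : c * ∫ b, (∑ i, M.alloc b i) ∂μ ≤ 0 := mul_nonpos_of_nonpos_of_nonneg hc h0
    rw [Rev]; linarith
  · have hInt2 : ¬ Integrable (fun b => (∑ i, M.pay b i) - c * ∑ i, M.alloc b i) μ := by
      intro h
      have h2 := h.add ((integrable_sum_alloc M μ).const_mul c)
      apply hInt
      have heq : (fun b => ∑ i, M.pay b i)
          = (fun b => (∑ i, M.pay b i) - c * ∑ i, M.alloc b i)
            + (fun b => c * ∑ i, M.alloc b i) := by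
        funext b; simp only [Pi.add_apply]; ring
      rw [heq]; exact h2
    rw [Rev, integral_undef hInt, integral_undef hInt2]

lemma pi_map_shift (μ : Fin n → Measure ℝ) [∀ i, IsProbabilityMeasure (μ i)] (c : ℝ) :
    (Measure.pi μ).map (fun b => fun j => b j + c)
      = Measure.pi (fun i => (μ i).map (· + c)) := by
  haveI : IsProbabilityMeasure ((Measure.pi μ).map (fun b : Fin n → ℝ => fun j => b j + c)) :=
    Measure.isProbabilityMeasure_map (meas_shiftFn n c).aemeasurable
  refine (Measure.pi_eq fun s hs => ?_).symm
  rw [Measure.map_apply (meas_shiftFn n c) (MeasurableSet.univ_pi hs)]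
  have hpre : (fun b : Fin n → ℝ => fun j => b j + c) ⁻¹' (pi univ s)
      = pi univ (fun i => (· + c) ⁻¹' s i) := by
    ext b; simp [Set.mem_pi]
  rw [hpre, Measure.pi_pi]
  refine Finset.prod_congr rfl fun i _ => ?_
  rw [Measure.map_apply (measurable_add_const c) (hs i)]

end Aux

/-- shifted distributions have similar revenues: with `D̃ i` the `ε`-right
shift of `D i` and `D̰ i` the `ε`-left shift, every DSIC and IR mechanism `M` admits a DSIC
and IR mechanism `M'` with `Rev(M', ×ᵢ D̰ i) ≥ Rev(M, ×ᵢ D̃ i) − 2ε`; in particular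
`OPT(×ᵢ D̰ i) ≥ OPT(×ᵢ D̃ i) − 2ε`. -/
theorem stmt5 (n : ℕ) (H ε : ℝ) (hH : 0 < H) (hε : 0 < ε)
    (D : Fin n → Measure ℝ)
    (hDprob : ∀ i, IsProbabilityMeasure (D i))
    (hDsupp : ∀ i, D i (Icc 0 H) = 1) :
    (∀ M : Mech n, DSIC M → IR M →
      ∃ M' : Mech n, DSIC M' ∧ IR M' ∧
        Rev M (Measure.pi fun i => (D i).map (· + ε)) - 2 * ε ≤
          Rev M' (Measure.pi fun i => (D i).map (· - ε))) ∧
    OPT (Measure.pi fun i => (D i).map (· + ε)) - 2 * ε ≤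
      OPT (Measure.pi fun i => (D i).map (· - ε)) := by
  haveI : ∀ i, IsProbabilityMeasure ((D i).map (· + ε)) := fun i =>
    Measure.isProbabilityMeasure_map (measurable_add_const ε).aemeasurable
  haveI : ∀ i, IsProbabilityMeasure ((D i).map (· - ε)) := fun i =>
    Measure.isProbabilityMeasure_map (measurable_sub_const ε).aemeasurable
  have hleft : ∀ i, (D i).map (· - ε) = (D i).map (· + (-ε)) := by
    intro i; simp only [sub_eq_add_neg]
  -- the pushforward of the left-shifted product by +2ε is the right-shifted product
  have hkey : (Measure.pi fun i => (D i).map (· - ε)).map (fun b => fun j => b j + (2*ε))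
      = Measure.pi (fun i => (D i).map (· + ε)) := by
    rw [pi_map_shift]
    refine congrArg Measure.pi (funext fun i => ?_)
    rw [hleft i, Measure.map_map (measurable_add_const _) (measurable_add_const _)]
    refine congrFun (congrArg _ ?_) _
    exact funext fun x => by simp only [Function.comp_apply]; ring
  have hkey' : (Measure.pi fun i => (D i).map (· + ε)).map (fun b => fun j => b j + (-(2*ε)))
      = Measure.pi (fun i => (D i).map (· - ε)) := by
    rw [pi_map_shift]
    refine congrArg Measure.pi (funext fun i => ?_)
    rw [hleft i, Measure.map_map (measurable_add_const _) (measurable_add_const _)]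
    refine congrFun (congrArg _ ?_) _
    exact funext fun x => by simp only [Function.comp_apply]; ring
  have hmain : ∀ M : Mech n, DSIC M → IR M →
      ∃ M' : Mech n, DSIC M' ∧ IR M' ∧
        Rev M (Measure.pi fun i => (D i).map (· + ε)) - 2 * ε ≤
          Rev M' (Measure.pi fun i => (D i).map (· - ε)) := by
    intro M hDS hIR
    refine ⟨shiftMech M (2*ε), shift_DSIC hDS _, shift_IR hIR _, ?_⟩
    have := rev_shift_ge M (2*ε) (by linarith) (Measure.pi fun i => (D i).map (· - ε))
    rwa [hkey] at this
  refine ⟨hmain, ?_⟩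
  -- the reverse direction, for boundedness
  have hrev : ∀ M' : Mech n, DSIC M' → IR M' →
      ∃ M'' : Mech n, DSIC M'' ∧ IR M'' ∧
        Rev M' (Measure.pi fun i => (D i).map (· - ε)) ≤
          Rev M'' (Measure.pi fun i => (D i).map (· + ε)) := by
    intro M' hDS hIR
    refine ⟨shiftMech M' (-(2*ε)), shift_DSIC hDS _, shift_IR hIR _, ?_⟩
    have := rev_shift_ge' M' (-(2*ε)) (by linarith) (Measure.pi fun i => (D i).map (· + ε))
    rwa [hkey'] at this
  set St : Set ℝ := {r | ∃ M : Mech n, DSIC M ∧ IR M ∧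
      r = Rev M (Measure.pi fun i => (D i).map (· + ε))} with hSt
  set Sl : Set ℝ := {r | ∃ M : Mech n, DSIC M ∧ IR M ∧
      r = Rev M (Measure.pi fun i => (D i).map (· - ε))} with hSl
  have hzero : ∀ ν : Measure (Fin n → ℝ),
      ∃ M : Mech n, DSIC M ∧ IR M ∧ (0 : ℝ) = Rev M ν := by
    intro ν
    refine ⟨⟨fun _ _ => 0, fun _ _ => 0, fun _ _ => le_refl 0, fun _ => by simp,
      fun _ => measurable_const, fun _ => measurable_const⟩, ?_, ?_, ?_⟩
    · intro i v v'; simp [util]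
    · intro i v; simp [util]
    · simp [Rev]
  have hStne : St.Nonempty := ⟨0, hzero _⟩
  have hSlne : Sl.Nonempty := ⟨0, hzero _⟩
  by_cases hBdd : BddAbove Sl
  · have h1 : ∀ r ∈ St, r - 2*ε ≤ sSup Sl := by
      rintro r ⟨M, hDS, hIR, rfl⟩
      obtain ⟨M', hDS', hIR', hle⟩ := hmain M hDS hIR
      exact hle.trans (le_csSup hBdd ⟨M', hDS', hIR', rfl⟩)
    have h2 : sSup St ≤ sSup Sl + 2*ε := csSup_le hStne fun r hr => by linarith [h1 r hr]
    simp only [OPT]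
    linarith
  · have hBdd' : ¬ BddAbove St := by
      intro ⟨B, hB⟩
      refine hBdd ⟨B, ?_⟩
      rintro s ⟨M', hDS', hIR', rfl⟩
      obtain ⟨M'', hDS'', hIR'', hle⟩ := hrev M' hDS' hIR'
      exact hle.trans (hB ⟨M'', hDS'', hIR'', rfl⟩)
    simp only [OPT]
    rw [show ({r | ∃ M : Mech n, DSIC M ∧ IR M ∧
        r = Rev M (Measure.pi fun i => (D i).map (· + ε))}) = St from rfl,
      show ({r | ∃ M : Mech n, DSIC M ∧ IR M ∧
        r = Rev M (Measure.pi fun i => (D i).map (· - ε))}) = Sl from rfl,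
      Real.sSup_of_not_bddAbove hBdd', Real.sSup_of_not_bddAbove hBdd]
    linarith
end

section
/- Let F and F̂ be probability distributions on ℝ_{≥0}^k (with the ℓ1 metric) whose Prokhorov distance satisfies ‖F − F̂‖_P ≤ ε, and let δ > 0. Then E_{ℓ ∼ Uniform([0,δ]^k)} [ ‖⌊F⌋_{ℓ,δ} − ⌊F̂⌋_{ℓ,δ}‖_{TV} ] ≤ (1 + 1/δ)·ε. -/
open MeasureTheory Set

namespace MultiItem

/-- Feasible deterministic allocations of `m` items to `n` bidders: each item goes to at
most one bidder. -/
def Alloc (n m : ℕ) : Type :=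
  {x : Fin n → Fin m → Bool // ∀ j : Fin m, (Finset.univ.filter fun i => x i j = true).card ≤ 1}

instance (n m : ℕ) : Fintype (Alloc n m) := by
  unfold Alloc; infer_instance

instance (n m : ℕ) : DecidableEq (Alloc n m) := by
  unfold Alloc; infer_instance

/-- The empty allocation: nobody gets anything. -/
def emptyAlloc (n m : ℕ) : Alloc n m :=
  ⟨fun _ _ => false, by intro j; simp⟩

/-- Measurable-space structure on `Option α`: a set is measurable iff its preimage under
`some` is measurable. -/
instance {α : Type*} [m₀ : MeasurableSpace α] : MeasurableSpace (Option α) :=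
  MeasurableSpace.map some m₀

/-- A (randomized) multi-item mechanism, represented by the distribution over allocations
and the expected payments induced on each bid profile; the bid `none` is the
non-participation symbol `⊥`, which results in the empty allocation and zero payments. -/
structure Mechanism (n m : ℕ) where
  allocProb : (Fin n → Option (Fin m → ℝ)) → Alloc n m → ℝ
  pay : (Fin n → Option (Fin m → ℝ)) → Fin n → ℝ
  allocProb_nonneg : ∀ b x, 0 ≤ allocProb b x
  allocProb_sum_one : ∀ b, ∑ x : Alloc n m, allocProb b x = 1
  optOut : ∀ b, (∃ i, b i = none) →
    (allocProb b = fun x => if x = emptyAlloc n m then 1 else 0) ∧ pay b = fun _ => 0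
  meas_allocProb : ∀ x, Measurable fun b => allocProb b x
  meas_pay : ∀ i, Measurable fun b => pay b i

variable {n m : ℕ}

/-- Expected utility of bidder `i` with type `t` under bid profile `b`, for the valuation
profile `v`. -/
def util (v : Fin n → (Fin m → ℝ) → Alloc n m → ℝ) (M : Mechanism n m)
    (i : Fin n) (t : Fin m → ℝ) (b : Fin n → Option (Fin m → ℝ)) : ℝ :=
  (∑ x : Alloc n m, M.allocProb b x * v i t x) - M.pay b i

/-- (Ex-post) individual rationality on type profiles from `[0,H]^m`. -/
def IsIR (H : ℝ) (v : Fin n → (Fin m → ℝ) → Alloc n m → ℝ) (M : Mechanism n m) : Prop :=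
  ∀ t : Fin n → Fin m → ℝ, (∀ i j, t i j ∈ Icc (0:ℝ) H) →
    ∀ i, 0 ≤ util v M i (t i) fun j => some (t j)

/-- Interim expected utility of bidder `i` with type `t` bidding `bid`, when all other
bidders bid their true types drawn from `D`. -/
noncomputable def interim (v : Fin n → (Fin m → ℝ) → Alloc n m → ℝ) (M : Mechanism n m)
    (D : Fin n → Measure (Fin m → ℝ)) (i : Fin n) (t : Fin m → ℝ)
    (bid : Option (Fin m → ℝ)) : ℝ :=
  ∫ b, util v M i t (fun j => if j = i then bid else some (b j)) ∂(Measure.pi D)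

/-- The (topological) support of a measure. -/
def msupport {α : Type*} [TopologicalSpace α] [MeasurableSpace α] (μ : Measure α) : Set α :=
  {x | ∀ U : Set α, IsOpen U → x ∈ U → 0 < μ U}

/-- `η`-Bayesian incentive compatibility w.r.t. the product of the `D i` (misreports range
over types in `[0,H]^m` and the non-participation bid `⊥`). -/
def IsBIC (η H : ℝ) (v : Fin n → (Fin m → ℝ) → Alloc n m → ℝ)
    (M : Mechanism n m) (D : Fin n → Measure (Fin m → ℝ)) : Prop :=
  ∀ i : Fin n, ∀ t ∈ msupport (D i), ∀ bid : Option (Fin m → ℝ),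
    (∀ s ∈ bid, ∀ j, s j ∈ Icc (0:ℝ) H) →
    interim v M D i t bid ≤ interim v M D i t (some t) + η

/-- Expected revenue under truthful bidding from `D`. -/
noncomputable def RevT (M : Mechanism n m) (D : Fin n → Measure (Fin m → ℝ)) : ℝ :=
  ∫ b, (∑ i, M.pay (fun j => some (b j)) i) ∂(Measure.pi D)

/-- Optimal revenue over `η`-BIC and IR mechanisms. -/
noncomputable def OPT (η H : ℝ) (v : Fin n → (Fin m → ℝ) → Alloc n m → ℝ)
    (D : Fin n → Measure (Fin m → ℝ)) : ℝ :=
  sSup {r | ∃ M : Mechanism n m, IsIR H v M ∧ IsBIC η H v M D ∧ r = RevT M D}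

/-- The distribution is supported on the box `[0,H]^m`. -/
def suppBox (H : ℝ) (μ : Measure (Fin m → ℝ)) : Prop :=
  μ {t | ∀ j, t j ∈ Icc (0:ℝ) H} = 1

/-- The total variation distance between `P` and `Q` is at most `ε`. -/
def TVLe {α : Type*} [MeasurableSpace α] (P Q : Measure α) (ε : ℝ) : Prop :=
  ∀ A : Set α, MeasurableSet A → |(P A).toReal - (Q A).toReal| ≤ ε

/-- The total variation distance between two measures. -/
noncomputable def tvDist {α : Type*} [MeasurableSpace α] (P Q : Measure α) : ℝ :=
  sSup {r | ∃ A : Set α, MeasurableSet A ∧ r = |(P A).toReal - (Q A).toReal|}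

/-- The Prokhorov distance (w.r.t. the `ℓ1` metric) between `P` and `Q` is at most `ε`. -/
def ProkhorovLe {k : ℕ} (P Q : Measure (Fin k → ℝ)) (ε : ℝ) : Prop :=
  ∀ ε' : ℝ, ε < ε' → ∀ A : Set (Fin k → ℝ), MeasurableSet A →
    P A ≤ Q {x | ∃ y ∈ A, (∑ j, |x j - y j|) < ε'} + ENNReal.ofReal ε' ∧
    Q A ≤ P {x | ∃ y ∈ A, (∑ j, |x j - y j|) < ε'} + ENNReal.ofReal ε'

/-- Round `x ≥ 0` down to the grid `{0} ∪ {ℓ + i·δ : i ∈ ℤ≥0}`. -/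
noncomputable def roundPt (ℓ δ x : ℝ) : ℝ :=
  if x < ℓ then 0 else ℓ + ⌊(x - ℓ) / δ⌋ * δ

/-- The pushforward `⌊F⌋_{ℓ,δ}` of a distribution under coordinatewise rounding. -/
noncomputable def roundMeasure {k : ℕ} (ℓ : Fin k → ℝ) (δ : ℝ)
    (F : Measure (Fin k → ℝ)) : Measure (Fin k → ℝ) :=
  F.map fun x j => roundPt (ℓ j) δ (x j)

end MultiItem

open MultiItem

section Stmt8Aux

open MultiItem

variable {α : Type*} [MeasurableSpace α] [MeasurableSingletonClass α]

lemma stmt8_fiber_le (P Q : Measure α) {r : α → α} (hr : Measurable r)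
    (hcr : (Set.range r).Countable) {C : Set α}
    (hC : ∀ x y, r x = r y → x ∈ C → y ∈ C)
    (h : ∀ x ∈ C, P {z | r z = r x} ≤ Q {z | r z = r x}) : P C ≤ Q C := by
  have hCeq : C = ⋃ q ∈ r '' C, r ⁻¹' {q} := by
    ext z
    simp only [mem_iUnion, mem_preimage, mem_singleton_iff, mem_image, exists_prop]
    constructor
    · intro hz; exact ⟨r z, ⟨z, hz, rfl⟩, rfl⟩
    · rintro ⟨q, ⟨x, hx, rfl⟩, hq⟩; exact hC x z hq.symm hx
  have hcnt : (r '' C).Countable := hcr.mono (image_subset_range _ _)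
  have hdisj : (r '' C).PairwiseDisjoint fun q => r ⁻¹' {q} := fun a _ b _ hab =>
    Disjoint.preimage r (disjoint_singleton.2 hab)
  have hmeas : ∀ q ∈ r '' C, MeasurableSet (r ⁻¹' {q}) := fun q _ =>
    hr (measurableSet_singleton q)
  rw [hCeq, measure_biUnion hcnt hdisj hmeas, measure_biUnion hcnt hdisj hmeas]
  refine ENNReal.tsum_le_tsum fun q => ?_
  obtain ⟨x, hx, hq⟩ := q.2
  rw [← hq]
  exact h x hx

lemma stmt8_key_le (P Q : Measure α) [IsFiniteMeasure P] [IsFiniteMeasure Q]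
    {r : α → α} (hr : Measurable r) (hcr : (Set.range r).Countable)
    {B : Set α} (hB : MeasurableSet B) (hBf : ∀ x y, r x = r y → x ∈ B → y ∈ B)
    {S : Set α} (hS : MeasurableSet S) (hSf : ∀ x y, r x = r y → x ∈ S → y ∈ S)
    (hSpos : ∀ x ∈ S, Q {z | r z = r x} ≤ P {z | r z = r x})
    (hSneg : ∀ x ∉ S, P {z | r z = r x} ≤ Q {z | r z = r x}) :
    (P B).toReal - (Q B).toReal ≤ (P S).toReal - (Q S).toReal := by
  have h1 : P (B \ S) ≤ Q (B \ S) := by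
    refine stmt8_fiber_le P Q hr hcr (fun x y hxy hx => ?_) (fun x hx => hSneg x hx.2)
    exact ⟨hBf x y hxy hx.1, fun hy => hx.2 (hSf y x hxy.symm hy)⟩
  have h2 : Q (S \ B) ≤ P (S \ B) := by
    refine stmt8_fiber_le Q P hr hcr (fun x y hxy hx => ?_) (fun x hx => hSpos x hx.1)
    exact ⟨hSf x y hxy hx.1, fun hy => hx.2 (hBf y x hxy.symm hy)⟩
  have big : P B + Q S ≤ P S + Q B := by
    have eB : P (B ∩ S) + P (B \ S) = P B := measure_inter_add_diff B hS
    have eQS : Q (S ∩ B) + Q (S \ B) = Q S := measure_inter_add_diff S hB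
    have ePS : P (S ∩ B) + P (S \ B) = P S := measure_inter_add_diff S hB
    have eQB : Q (B ∩ S) + Q (B \ S) = Q B := measure_inter_add_diff B hS
    rw [← eB, ← eQS, ← ePS, ← eQB, inter_comm B S]
    calc P (S ∩ B) + P (B \ S) + (Q (S ∩ B) + Q (S \ B))
        ≤ P (S ∩ B) + Q (B \ S) + (Q (S ∩ B) + P (S \ B)) := by gcongr
      _ = P (S ∩ B) + P (S \ B) + (Q (S ∩ B) + Q (B \ S)) := by ring
  have := ENNReal.toReal_mono (by finiteness) big
  rw [ENNReal.toReal_add (by finiteness) (by finiteness),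
    ENNReal.toReal_add (by finiteness) (by finiteness)] at this
  linarith

omit [MeasurableSingletonClass α] in
lemma stmt8_prob_compl_toReal (P : Measure α) [IsProbabilityMeasure P] {B : Set α}
    (hB : MeasurableSet B) : (P Bᶜ).toReal = 1 - (P B).toReal := by
  rw [measure_compl hB (measure_ne_top _ _), measure_univ,
    ENNReal.toReal_sub_of_le prob_le_one ENNReal.one_ne_top, ENNReal.toReal_one]

lemma stmt8_tv_le (P Q : Measure α) [IsProbabilityMeasure P] [IsProbabilityMeasure Q]
    {r : α → α} (hr : Measurable r) (hcr : (Set.range r).Countable)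
    {S : Set α} (hS : MeasurableSet S) (hSf : ∀ x y, r x = r y → x ∈ S → y ∈ S)
    (hSpos : ∀ x ∈ S, Q {z | r z = r x} ≤ P {z | r z = r x})
    (hSneg : ∀ x ∉ S, P {z | r z = r x} ≤ Q {z | r z = r x}) :
    tvDist (P.map r) (Q.map r) ≤ (P S).toReal - (Q S).toReal := by
  have hM : 0 ≤ (P S).toReal - (Q S).toReal := by
    have := stmt8_key_le P Q hr hcr MeasurableSet.empty
      (by simp) hS hSf hSpos hSneg
    simpa using this
  refine Real.sSup_le ?_ hM
  rintro x ⟨A, hA, rfl⟩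
  rw [Measure.map_apply hr hA, Measure.map_apply hr hA]
  have hB : MeasurableSet (r ⁻¹' A) := hr hA
  have hBf : ∀ x y, r x = r y → x ∈ r ⁻¹' A → y ∈ r ⁻¹' A := fun x y hxy hx => by
    simp only [mem_preimage] at *; rwa [← hxy]
  rw [abs_le]
  constructor
  · have hBcf : ∀ x y, r x = r y → x ∈ (r ⁻¹' A)ᶜ → y ∈ (r ⁻¹' A)ᶜ :=
      fun x y hxy hx hy => hx (hBf y x hxy.symm hy)
    have h := stmt8_key_le P Q hr hcr hB.compl hBcf hS hSf hSpos hSneg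
    rw [stmt8_prob_compl_toReal P hB, stmt8_prob_compl_toReal Q hB] at h
    linarith
  · exact stmt8_key_le P Q hr hcr hB hBf hS hSf hSpos hSneg

lemma stmt8_measurable_roundPt_pair {δ : ℝ} :
    Measurable fun p : ℝ × ℝ => roundPt p.1 δ p.2 := by
  unfold roundPt
  apply Measurable.ite (measurableSet_lt measurable_snd measurable_fst) measurable_const
  exact measurable_fst.add
    ((measurable_from_top.comp ((measurable_snd.sub measurable_fst).div_const δ).floor).mul
      measurable_const)

lemma stmt8_roundPt_ne_exists {δ : ℝ} (hδ : 0 < δ) {x y a : ℝ} (hxy : x ≤ y)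
    (hne : roundPt a δ x ≠ roundPt a δ y) :
    ∃ i : ℤ, x - i * δ < a ∧ a ≤ y - i * δ := by
  rcases lt_or_ge y a with hya | hay
  · exact absurd (by rw [roundPt, roundPt, if_pos hya, if_pos (lt_of_le_of_lt hxy hya)]) hne
  rcases lt_or_ge x a with hxa | hax
  · exact ⟨0, by simpa using hxa, by simpa using hay⟩
  · rw [roundPt, roundPt, if_neg (not_lt.2 hax), if_neg (not_lt.2 (hax.trans hxy))] at hne
    have hfl : ⌊(x - a) / δ⌋ < ⌊(y - a) / δ⌋ := by
      rcases lt_or_ge (⌊(x - a) / δ⌋) (⌊(y - a) / δ⌋) with h | h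
      · exact h
      have : ⌊(x - a) / δ⌋ = ⌊(y - a) / δ⌋ :=
        le_antisymm (Int.floor_mono (by gcongr <;> linarith)) h
      exact absurd (by rw [this]) hne
    refine ⟨⌊(y - a) / δ⌋, ?_, ?_⟩
    · have : (x - a) / δ < ⌊(y - a) / δ⌋ := Int.floor_lt.1 hfl
      have := (div_lt_iff₀ hδ).1 this
      linarith
    · have : (⌊(y - a) / δ⌋ : ℝ) ≤ (y - a) / δ := Int.floor_le _
      have := (le_div_iff₀ hδ).1 this
      linarith

lemma stmt8_oneD {δ : ℝ} (hδ : 0 < δ) {x y : ℝ} (hxy : x ≤ y) :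
    ((ENNReal.ofReal δ)⁻¹ • volume.restrict (Icc (0:ℝ) δ))
      {a | roundPt a δ x ≠ roundPt a δ y} ≤ ENNReal.ofReal ((y - x) / δ) := by
  set μ1 : Measure ℝ := (ENNReal.ofReal δ)⁻¹ • volume.restrict (Icc (0:ℝ) δ) with hμ1
  have hδ0 : ENNReal.ofReal δ ≠ 0 := by simp [hδ, le_of_lt]
  have huniv : μ1 univ = 1 := by
    rw [hμ1, Measure.smul_apply, smul_eq_mul, Measure.restrict_apply_univ, Real.volume_Icc]
    rw [sub_zero, ENNReal.inv_mul_cancel hδ0 ENNReal.ofReal_ne_top]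
  rcases le_or_gt δ (y - x) with hbig | hsmall
  · calc μ1 _ ≤ μ1 univ := measure_mono (subset_univ _)
      _ = 1 := huniv
      _ ≤ ENNReal.ofReal ((y - x) / δ) := by
          apply ENNReal.one_le_ofReal.2
          rw [le_div_iff₀ hδ]; linarith
  · set i₀ : ℤ := ⌊y / δ⌋ with hi₀
    set u : ℝ := x - i₀ * δ with hu
    set v : ℝ := y - i₀ * δ with hv
    have hv0 : 0 ≤ v := by
      have : (i₀ : ℝ) ≤ y / δ := Int.floor_le _
      have := (le_div_iff₀ hδ).1 this
      simp only [hv]; linarith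
    have hvδ : v < δ := by
      have : y / δ < i₀ + 1 := Int.lt_floor_add_one _
      have := (div_lt_iff₀ hδ).1 this
      simp only [hv]; nlinarith
    have huv : v - u = y - x := by simp only [hu, hv]; ring
    have hsub : {a | roundPt a δ x ≠ roundPt a δ y} ∩ Icc 0 δ ⊆
        Icc (max u 0) v ∪ Icc (max (u + δ) 0) δ := by
      rintro a ⟨haT, ha0, haδ⟩
      obtain ⟨i, hia, hai⟩ := stmt8_roundPt_ne_exists hδ hxy haT
      have hile : i ≤ i₀ := by
        apply Int.le_floor.2
        rw [le_div_iff₀ hδ]; push_cast; linarith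
      have hige : i₀ ≤ i + 1 := by
        have : (i₀ : ℤ) < i + 2 := by
          apply Int.floor_lt.2
          rw [div_lt_iff₀ hδ]; push_cast; nlinarith
        omega
      rcases (by omega : i = i₀ ∨ i = i₀ - 1) with rfl | rfl
      · left
        exact ⟨max_le (by simp only [hu]; linarith) ha0, by simp only [hv]; linarith⟩
      · right
        constructor
        · apply max_le _ ha0
          push_cast at hia
          simp only [hu]; linarith
        · exact haδ
    have hvol : μ1 {a | roundPt a δ x ≠ roundPt a δ y} ≤
        (ENNReal.ofReal δ)⁻¹ * ENNReal.ofReal (y - x) := by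
      rw [hμ1, Measure.smul_apply, smul_eq_mul]
      gcongr
      rw [Measure.restrict_apply' measurableSet_Icc]
      refine le_trans (measure_mono hsub) (le_trans (measure_union_le _ _) ?_)
      rw [Real.volume_Icc, Real.volume_Icc]
      rcases le_or_gt 0 u with hu0 | hu0
      · have h1 : max u 0 = u := max_eq_left hu0
        have h2 : max (u + δ) 0 = u + δ := max_eq_left (by linarith)
        rw [h1, h2]
        have : ENNReal.ofReal (δ - (u + δ)) = 0 := by
          rw [ENNReal.ofReal_eq_zero]; linarith
        rw [this, add_zero]
        exact ENNReal.ofReal_le_ofReal (by linarith)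
      · have h1 : max u 0 = 0 := max_eq_right hu0.le
        have h2 : max (u + δ) 0 = u + δ := max_eq_left (by nlinarith [huv])
        rw [h1, h2, sub_zero]
        rw [← ENNReal.ofReal_add hv0 (by linarith : (0:ℝ) ≤ δ - (u + δ))]
        exact ENNReal.ofReal_le_ofReal (by linarith)
    refine hvol.trans ?_
    rw [ENNReal.ofReal_div_of_pos hδ, ENNReal.div_eq_inv_mul]

lemma stmt8_pi_eval_marginal {k : ℕ} (μ1 : Measure ℝ) [IsProbabilityMeasure μ1] (j : Fin k)
    (T : Set ℝ) :
    Measure.pi (fun _ : Fin k => μ1) ((fun ℓ => ℓ j) ⁻¹' T) = μ1 T := by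
  have hset : (fun ℓ : Fin k → ℝ => ℓ j) ⁻¹' T =
      pi univ (Function.update (fun _ => (univ : Set ℝ)) j T) := by
    ext ℓ
    simp only [mem_preimage, mem_pi, mem_univ, forall_true_left, Function.update_apply]
    constructor
    · intro h i; split_ifs with hi; · subst hi; exact h
      · trivial
    · intro h; have := h j; simpa using this
  rw [hset, Measure.pi_pi]
  rw [show (fun i => μ1 (Function.update (fun _ => (univ : Set ℝ)) j T i)) =
      Function.update (fun _ => μ1 univ) j (μ1 T) by
    ext i
    rcases eq_or_ne i j with rfl | hi
    · simp
    · simp [Function.update_apply, hi]]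
  rw [Finset.prod_update_of_mem (Finset.mem_univ j)]
  simp

lemma stmt8_lipschitz_diff_le {k : ℕ} (F Fhat : Measure (Fin k → ℝ))
    [IsProbabilityMeasure F] [IsProbabilityMeasure Fhat]
    {ε δ : ℝ} (hε : 0 ≤ ε) (hδ : 0 < δ) (hPQ : ProkhorovLe F Fhat ε)
    {G : (Fin k → ℝ) → ℝ} (hG : Measurable G) (hG0 : ∀ x, 0 ≤ G x) (hG1 : ∀ x, G x ≤ 1)
    (hLip : ∀ x y, G x ≤ G y + (∑ j, |x j - y j|) / δ) :
    ∫ x, G x ∂F - ∫ x, G x ∂Fhat ≤ (1 + 1 / δ) * ε := by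
  have h1δ : (0:ℝ) < 1 + 1/δ := by positivity
  refine le_of_forall_pos_le_add fun η hη => ?_
  have hεε' : ε < ε + η / (1 + 1/δ) := lt_add_of_pos_right _ (div_pos hη h1δ)
  set ε' : ℝ := ε + η / (1 + 1/δ) with hε'def
  have hε'pos : 0 < ε' := lt_of_le_of_lt hε hεε'
  have hgoal : (1 + 1/δ) * ε' = (1 + 1/δ) * ε + η := by
    rw [hε'def, mul_add, mul_div_cancel₀ _ (ne_of_gt h1δ)]
  rw [← hgoal]
  set c : ℝ := ε'/δ with hc
  have hc0 : 0 < c := div_pos hε'pos hδ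
  have hGint : ∀ (μ : Measure (Fin k → ℝ)) [IsProbabilityMeasure μ], Integrable G μ := by
    intro μ _
    refine (integrable_const (1:ℝ)).mono' hG.aestronglyMeasurable ?_
    filter_upwards with x
    rw [Real.norm_eq_abs, abs_le]
    exact ⟨by linarith [hG0 x], hG1 x⟩
  set φ : ℝ → ℝ := fun t => (F {a | t < G a}).toReal with hφdef
  set ψ : ℝ → ℝ := fun t => (Fhat {a | t < G a}).toReal with hψdef
  have hanti : ∀ (μ : Measure (Fin k → ℝ)) [IsProbabilityMeasure μ],
      Antitone fun t : ℝ => (μ {a | t < G a}).toReal := by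
    intro μ _ s t hst
    exact ENNReal.toReal_mono (measure_ne_top _ _)
      (measure_mono fun a ha => lt_of_le_of_lt hst ha)
  have hφanti : Antitone φ := hanti F
  have hψanti : Antitone ψ := hanti Fhat
  have hle1 : ∀ (μ : Measure (Fin k → ℝ)) [IsProbabilityMeasure μ], ∀ t : ℝ,
      (μ {a | t < G a}).toReal ≤ 1 := by
    intro μ _ t
    rw [← ENNReal.toReal_one]
    exact ENNReal.toReal_mono ENNReal.one_ne_top prob_le_one
  have hzero : ∀ (μ : Measure (Fin k → ℝ)), ∀ t : ℝ, 1 ≤ t → (μ {a | t < G a}).toReal = 0 := by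
    intro μ t ht
    have : {a | t < G a} = ∅ := by
      ext a; simp only [mem_setOf_eq, mem_empty_iff_false, iff_false, not_lt]
      linarith [hG1 a]
    simp [this]
  have key : ∀ t : ℝ, φ t ≤ ψ (t - c) + ε' := by
    intro t
    have hA : MeasurableSet {a | t < G a} := measurableSet_lt measurable_const hG
    have hP := (hPQ ε' hεε' _ hA).1
    have hsub : {x | ∃ y ∈ {a | t < G a}, (∑ j, |x j - y j|) < ε'} ⊆ {a | t - c < G a} := by
      rintro x ⟨y, hy, hxy⟩
      have hl := hLip y x
      have hsum : (∑ j, |y j - x j|) = ∑ j, |x j - y j| :=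
        Finset.sum_congr rfl fun j _ => abs_sub_comm _ _
      rw [hsum] at hl
      have hdiv : (∑ j, |x j - y j|)/δ < c := by rw [hc]; gcongr
      simp only [mem_setOf_eq] at hy ⊢
      linarith
    calc φ t ≤ (Fhat {x | ∃ y ∈ {a | t < G a}, (∑ j, |x j - y j|) < ε'}
          + ENNReal.ofReal ε').toReal := ENNReal.toReal_mono (by finiteness) hP
      _ = (Fhat {x | ∃ y ∈ {a | t < G a}, (∑ j, |x j - y j|) < ε'}).toReal + ε' := by
          rw [ENNReal.toReal_add (by finiteness) (by finiteness),
            ENNReal.toReal_ofReal hε'pos.le]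
      _ ≤ ψ (t - c) + ε' := by
          have := ENNReal.toReal_mono (measure_ne_top Fhat _) (measure_mono hsub)
          simpa [hψdef] using add_le_add_right this ε'
  have hlc : ∀ (μ : Measure (Fin k → ℝ)) [IsProbabilityMeasure μ],
      ∫ x, G x ∂μ = ∫ t in (0:ℝ)..1, (μ {a | t < G a}).toReal := by
    intro μ _
    rw [(hGint μ).integral_eq_integral_meas_lt (ae_of_all _ hG0)]
    have hui : Ioi (0:ℝ) = Ioc 0 1 ∪ Ioi 1 := (Ioc_union_Ioi_eq_Ioi zero_le_one).symm
    have hIalt : IntegrableOn (fun t => (μ {a | t < G a}).toReal) (Ioc 0 1) volume :=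
      ((hanti μ).intervalIntegrable).1
    have hIzero : IntegrableOn (fun t => (μ {a | t < G a}).toReal) (Ioi 1) volume := by
      refine (integrableOn_zero (s := Ioi 1)).congr_fun (fun t ht => (hzero μ t ht.le).symm)
        measurableSet_Ioi
    simp only [measureReal_def]
    rw [hui, setIntegral_union (Ioc_disjoint_Ioi le_rfl) measurableSet_Ioi hIalt hIzero,
      intervalIntegral.integral_of_le zero_le_one]
    have : ∫ t in Ioi (1:ℝ), (μ {a | t < G a}).toReal = 0 := by
      rw [setIntegral_congr_fun measurableSet_Ioi (fun t ht => hzero μ t ht.le)]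
      simp
    rw [this, add_zero]
  rw [hlc F, hlc Fhat]
  have hψint : ∀ a b : ℝ, IntervalIntegrable ψ volume a b := fun a b =>
    hψanti.intervalIntegrable
  have hψcint : ∀ a b : ℝ, IntervalIntegrable (fun t => ψ (t - c)) volume a b := fun a b =>
    (hψanti.comp_monotone
      (fun s t hst => by simp [sub_le_sub_right hst c] :
        Monotone fun t : ℝ => t - c)).intervalIntegrable
  have step1 : ∫ t in (0:ℝ)..1, φ t ≤ ∫ t in (0:ℝ)..1, (ψ (t - c) + ε') := by
    refine intervalIntegral.integral_mono_on zero_le_one (hφanti.intervalIntegrable)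
      ((hψcint 0 1).add (intervalIntegrable_const)) (fun t _ => key t)
  have step2 : ∫ t in (0:ℝ)..1, (ψ (t - c) + ε') = (∫ t in (0:ℝ)..1, ψ (t - c)) + ε' := by
    rw [intervalIntegral.integral_add (hψcint 0 1) intervalIntegrable_const,
      intervalIntegral.integral_const]
    norm_num
  have step3 : ∫ t in (0:ℝ)..1, ψ (t - c) = ∫ t in (0 - c)..(1 - c), ψ t :=
    intervalIntegral.integral_comp_sub_right ψ c
  have chas1 : (∫ t in (0-c)..(1-c), ψ t) + ∫ t in (1-c)..1, ψ t = ∫ t in (0-c)..1, ψ t :=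
    intervalIntegral.integral_add_adjacent_intervals (hψint _ _) (hψint _ _)
  have chas2 : (∫ t in (0-c)..(0:ℝ), ψ t) + ∫ t in (0:ℝ)..1, ψ t = ∫ t in (0-c)..1, ψ t :=
    intervalIntegral.integral_add_adjacent_intervals (hψint _ _) (hψint _ _)
  have hbd1 : ∫ t in (0-c)..(0:ℝ), ψ t ≤ c := by
    have h := intervalIntegral.integral_mono_on (by linarith : 0 - c ≤ (0:ℝ)) (hψint _ _)
      intervalIntegrable_const (fun t _ => hle1 Fhat t)
    simpa using h
  have hbd2 : (0:ℝ) ≤ ∫ t in (1-c)..1, ψ t :=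
    intervalIntegral.integral_nonneg (by linarith) (fun t _ => ENNReal.toReal_nonneg)
  have hring : (1 + 1/δ) * ε' = ε' + c := by rw [hc]; ring
  show (∫ t in (0:ℝ)..1, φ t) - ∫ t in (0:ℝ)..1, ψ t ≤ (1 + 1/δ) * ε'
  have e1 : ∫ t in (0:ℝ)..1, φ t ≤ (∫ t in (0:ℝ)..1, ψ (t - c)) + ε' := step2 ▸ step1
  have e2 : (∫ t in (0:ℝ)..1, ψ (t - c)) ≤ c + ∫ t in (0:ℝ)..1, ψ t := by
    rw [step3]; linarith
  rw [hring]
  linarith [e1, e2]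

end Stmt8Aux


/-- Prokhorov closeness gives small expected TV distance after random
rounding: if `F`, `F̂` are distributions on `ℝ≥0^k` with Prokhorov distance at most `ε`
(w.r.t. the `ℓ1` metric), then for a uniformly random grid shift `ℓ ∈ [0,δ]^k`, the expected
total variation distance between the rounded distributions `⌊F⌋_{ℓ,δ}` and `⌊F̂⌋_{ℓ,δ}` is
at most `(1 + 1/δ)·ε`. -/
theorem stmt8 (k : ℕ) (ε δ : ℝ) (hε : 0 ≤ ε) (hδ : 0 < δ)
    (F Fhat : Measure (Fin k → ℝ))
    (hF : IsProbabilityMeasure F) (hFhat : IsProbabilityMeasure Fhat)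
    (hFpos : F {x | ∀ j, 0 ≤ x j} = 1) (hFhatpos : Fhat {x | ∀ j, 0 ≤ x j} = 1)
    (hPQ : ProkhorovLe F Fhat ε) :
    ∫ ℓ, tvDist (roundMeasure ℓ δ F) (roundMeasure ℓ δ Fhat)
        ∂(Measure.pi fun _ : Fin k => (ENNReal.ofReal δ)⁻¹ • volume.restrict (Icc (0:ℝ) δ))
      ≤ (1 + 1 / δ) * ε := by
  haveI := hF; haveI := hFhat
  have h1δ : (0:ℝ) < 1 + 1/δ := by positivity
  haveI hμ1prob : IsProbabilityMeasure ((ENNReal.ofReal δ)⁻¹ • volume.restrict (Icc (0:ℝ) δ)) := by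
    constructor
    rw [Measure.smul_apply, smul_eq_mul, Measure.restrict_apply_univ, Real.volume_Icc, sub_zero]
    exact ENNReal.inv_mul_cancel (by simp [hδ, le_of_lt]) ENNReal.ofReal_ne_top
  set ν : Measure (Fin k → ℝ) :=
    Measure.pi fun _ : Fin k => (ENNReal.ofReal δ)⁻¹ • volume.restrict (Icc (0:ℝ) δ) with hν
  haveI hνprob : IsProbabilityMeasure ν := by rw [hν]; infer_instance
  -- measurability of the rounding map
  have hRmeas : ∀ ℓ : Fin k → ℝ,
      Measurable fun x : Fin k → ℝ => fun j => roundPt (ℓ j) δ (x j) := fun ℓ =>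
    measurable_pi_lambda _ fun j =>
      stmt8_measurable_roundPt_pair.comp (measurable_const.prodMk (measurable_pi_apply j))
  have hRcnt : ∀ ℓ : Fin k → ℝ,
      (Set.range fun x : Fin k → ℝ => fun j => roundPt (ℓ j) δ (x j)).Countable := by
    intro ℓ
    refine (Set.countable_pi fun j : Fin k =>
      ((Set.countable_range fun n : ℤ => ℓ j + n * δ).insert 0)).mono ?_
    rintro f ⟨x, rfl⟩
    intro j
    show roundPt (ℓ j) δ (x j) ∈ _
    rw [roundPt]
    split_ifs with h
    · exact Set.mem_insert _ _
    · exact Set.mem_insert_of_mem _ ⟨⌊(x j - ℓ j) / δ⌋, rfl⟩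
  -- the joint "positive cell" set B
  set U : Set (((Fin k → ℝ) × (Fin k → ℝ)) × (Fin k → ℝ)) :=
    {q | (fun j => roundPt (q.1.1 j) δ (q.2 j)) = fun j => roundPt (q.1.1 j) δ (q.1.2 j)}
    with hU
  have hUm : MeasurableSet U := by
    rw [hU]
    have : {q : ((Fin k → ℝ) × (Fin k → ℝ)) × (Fin k → ℝ) |
        (fun j => roundPt (q.1.1 j) δ (q.2 j)) = fun j => roundPt (q.1.1 j) δ (q.1.2 j)} =
        ⋂ j : Fin k, {q : ((Fin k → ℝ) × (Fin k → ℝ)) × (Fin k → ℝ) |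
          roundPt (q.1.1 j) δ (q.2 j) = roundPt (q.1.1 j) δ (q.1.2 j)} := by
      ext q
      simp only [mem_setOf_eq, mem_iInter, funext_iff]
    rw [this]
    refine MeasurableSet.iInter fun j => ?_
    have hp1 : Measurable fun q : ((Fin k → ℝ) × (Fin k → ℝ)) × (Fin k → ℝ) =>
        (q.1.1 j, q.2 j) :=
      ((measurable_pi_apply j).comp measurable_fst.fst).prodMk
        ((measurable_pi_apply j).comp measurable_snd)
    have hp2 : Measurable fun q : ((Fin k → ℝ) × (Fin k → ℝ)) × (Fin k → ℝ) =>
        (q.1.1 j, q.1.2 j) :=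
      ((measurable_pi_apply j).comp measurable_fst.fst).prodMk
        ((measurable_pi_apply j).comp measurable_fst.snd)
    have hm1 : Measurable fun q : ((Fin k → ℝ) × (Fin k → ℝ)) × (Fin k → ℝ) =>
        roundPt (q.1.1 j) δ (q.2 j) := stmt8_measurable_roundPt_pair.comp hp1
    have hm2 : Measurable fun q : ((Fin k → ℝ) × (Fin k → ℝ)) × (Fin k → ℝ) =>
        roundPt (q.1.1 j) δ (q.1.2 j) := stmt8_measurable_roundPt_pair.comp hp2
    exact measurableSet_eq_fun hm1 hm2
  have hΦm : Measurable fun p : (Fin k → ℝ) × (Fin k → ℝ) => F (Prod.mk p ⁻¹' U) :=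
    measurable_measure_prodMk_left hUm
  have hΦhm : Measurable fun p : (Fin k → ℝ) × (Fin k → ℝ) => Fhat (Prod.mk p ⁻¹' U) :=
    measurable_measure_prodMk_left hUm
  set B : Set ((Fin k → ℝ) × (Fin k → ℝ)) :=
    {p | Fhat (Prod.mk p ⁻¹' U) < F (Prod.mk p ⁻¹' U)} with hB
  have hBm : MeasurableSet B := by
    rw [hB]; exact measurableSet_lt hΦhm hΦm
  have hslice : ∀ ℓ x : Fin k → ℝ, Prod.mk (ℓ, x) ⁻¹' U =
      {z : Fin k → ℝ |
        (fun j => roundPt (ℓ j) δ (z j)) = fun j => roundPt (ℓ j) δ (x j)} := by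
    intro ℓ x; rw [hU]; rfl
  have hmem : ∀ ℓ x : Fin k → ℝ, ((ℓ, x) ∈ B ↔
      Fhat {z : Fin k → ℝ | (fun j => roundPt (ℓ j) δ (z j)) = fun j => roundPt (ℓ j) δ (x j)}
        < F {z : Fin k → ℝ |
            (fun j => roundPt (ℓ j) δ (z j)) = fun j => roundPt (ℓ j) δ (x j)}) := by
    intro ℓ x
    rw [hB, mem_setOf_eq, hslice ℓ x]
  -- pointwise tv bound
  have htv : ∀ ℓ : Fin k → ℝ, tvDist (roundMeasure ℓ δ F) (roundMeasure ℓ δ Fhat) ≤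
      (F (Prod.mk ℓ ⁻¹' B)).toReal - (Fhat (Prod.mk ℓ ⁻¹' B)).toReal := by
    intro ℓ
    have hSm : MeasurableSet (Prod.mk ℓ ⁻¹' B) := hBm.preimage measurable_prodMk_left
    have hsetEq : ∀ x y : Fin k → ℝ,
        (fun j => roundPt (ℓ j) δ (x j)) = (fun j => roundPt (ℓ j) δ (y j)) →
        {z : Fin k → ℝ | (fun j => roundPt (ℓ j) δ (z j)) = fun j => roundPt (ℓ j) δ (y j)} =
        {z : Fin k → ℝ | (fun j => roundPt (ℓ j) δ (z j)) = fun j => roundPt (ℓ j) δ (x j)} := by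
      intro x y hxy; rw [hxy]
    have hfib : ∀ x y : Fin k → ℝ,
        ((fun j => roundPt (ℓ j) δ (x j)) = fun j => roundPt (ℓ j) δ (y j)) →
        x ∈ Prod.mk ℓ ⁻¹' B → y ∈ Prod.mk ℓ ⁻¹' B := by
      intro x y hxy hx
      rw [mem_preimage] at hx ⊢
      rw [hmem] at hx ⊢
      rw [hsetEq x y hxy]
      exact hx
    have hpos : ∀ x ∈ Prod.mk ℓ ⁻¹' B,
        Fhat {z : Fin k → ℝ |
            (fun j => roundPt (ℓ j) δ (z j)) = fun j => roundPt (ℓ j) δ (x j)} ≤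
        F {z : Fin k → ℝ |
            (fun j => roundPt (ℓ j) δ (z j)) = fun j => roundPt (ℓ j) δ (x j)} := by
      intro x hx
      rw [mem_preimage, hmem] at hx
      exact hx.le
    have hneg : ∀ x ∉ Prod.mk ℓ ⁻¹' B,
        F {z : Fin k → ℝ |
            (fun j => roundPt (ℓ j) δ (z j)) = fun j => roundPt (ℓ j) δ (x j)} ≤
        Fhat {z : Fin k → ℝ |
            (fun j => roundPt (ℓ j) δ (z j)) = fun j => roundPt (ℓ j) δ (x j)} := by
      intro x hx
      rw [mem_preimage, hmem] at hx
      exact not_lt.1 hx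
    have := stmt8_tv_le F Fhat (hRmeas ℓ) (hRcnt ℓ) hSm hfib hpos hneg
    rw [roundMeasure, roundMeasure]
    exact this
  -- integrability
  have htoReal_le_one : ∀ (μ : Measure (Fin k → ℝ)) [IsProbabilityMeasure μ],
      ∀ s : Set (Fin k → ℝ), (μ s).toReal ≤ 1 := by
    intro μ _ s
    rw [← ENNReal.toReal_one]
    exact ENNReal.toReal_mono ENNReal.one_ne_top prob_le_one
  have hIntPiece : ∀ (μ : Measure (Fin k → ℝ)) [IsProbabilityMeasure μ],
      Integrable (fun ℓ => (μ (Prod.mk ℓ ⁻¹' B)).toReal) ν := by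
    intro μ _
    refine (integrable_const (1:ℝ)).mono'
      ((measurable_measure_prodMk_left (ν := μ) hBm).ennreal_toReal).aestronglyMeasurable ?_
    filter_upwards with ℓ
    rw [Real.norm_eq_abs, abs_of_nonneg ENNReal.toReal_nonneg]
    exact htoReal_le_one μ _
  have hf1i : Integrable (fun ℓ => (F (Prod.mk ℓ ⁻¹' B)).toReal) ν := hIntPiece F
  have hf2i : Integrable (fun ℓ => (Fhat (Prod.mk ℓ ⁻¹' B)).toReal) ν := hIntPiece Fhat
  by_cases hint : Integrable
      (fun ℓ => tvDist (roundMeasure ℓ δ F) (roundMeasure ℓ δ Fhat)) ν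
  swap
  · rw [integral_undef hint]
    exact mul_nonneg h1δ.le hε
  refine le_trans (integral_mono hint (hf1i.sub hf2i) htv) ?_
  simp only [Pi.sub_apply]
  rw [integral_sub hf1i hf2i]
  -- Fubini
  have key12 : ∀ (μ : Measure (Fin k → ℝ)) [IsProbabilityMeasure μ],
      ∫ ℓ, (μ (Prod.mk ℓ ⁻¹' B)).toReal ∂ν =
      ∫ x, (ν ((fun ℓ => (ℓ, x)) ⁻¹' B)).toReal ∂μ := by
    intro μ _
    rw [integral_toReal (measurable_measure_prodMk_left (ν := μ) hBm).aemeasurable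
        (ae_of_all _ fun ℓ => measure_lt_top μ _),
      integral_toReal (measurable_measure_prodMk_right (μ := ν) hBm).aemeasurable
        (ae_of_all _ fun x => measure_lt_top ν _)]
    congr 1
    rw [← Measure.prod_apply hBm, Measure.prod_apply_symm hBm]
  rw [key12 F, key12 Fhat]
  -- the averaged indicator G and its Lipschitz property
  have hGm : Measurable fun x : Fin k → ℝ => (ν ((fun ℓ => (ℓ, x)) ⁻¹' B)).toReal :=
    (measurable_measure_prodMk_right (μ := ν) hBm).ennreal_toReal
  have hLipG : ∀ x y : Fin k → ℝ,
      (ν ((fun ℓ => (ℓ, x)) ⁻¹' B)).toReal ≤ (ν ((fun ℓ => (ℓ, y)) ⁻¹' B)).toReal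
        + (∑ j, |x j - y j|) / δ := by
    intro x y
    have hsub2 : ((fun ℓ => (ℓ, x)) ⁻¹' B) ⊆ ((fun ℓ => (ℓ, y)) ⁻¹' B) ∪
        ⋃ j : Fin k, (fun ℓ : Fin k → ℝ => ℓ j) ⁻¹'
          {a : ℝ | roundPt a δ (x j) ≠ roundPt a δ (y j)} := by
      intro ℓ hℓ
      by_cases hD : ∀ j, roundPt (ℓ j) δ (x j) = roundPt (ℓ j) δ (y j)
      · left
        rw [mem_preimage] at hℓ ⊢
        rw [hmem] at hℓ ⊢
        have hxy : (fun j => roundPt (ℓ j) δ (x j)) = fun j => roundPt (ℓ j) δ (y j) :=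
          funext hD
        rw [show {z : Fin k → ℝ |
              (fun j => roundPt (ℓ j) δ (z j)) = fun j => roundPt (ℓ j) δ (y j)} =
            {z : Fin k → ℝ |
              (fun j => roundPt (ℓ j) δ (z j)) = fun j => roundPt (ℓ j) δ (x j)} by rw [hxy]]
        exact hℓ
      · push_neg at hD
        obtain ⟨j, hj⟩ := hD
        exact Or.inr (mem_iUnion.2 ⟨j, hj⟩)
    have hν1 : ν ((fun ℓ => (ℓ, x)) ⁻¹' B) ≤ ν ((fun ℓ => (ℓ, y)) ⁻¹' B)
        + ENNReal.ofReal ((∑ j, |x j - y j|) / δ) := by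
      refine le_trans (measure_mono hsub2) (le_trans (measure_union_le _ _) ?_)
      refine add_le_add le_rfl ?_
      refine le_trans (measure_iUnion_le _) ?_
      rw [tsum_fintype]
      have hterm : ∀ j : Fin k,
          ν ((fun ℓ : Fin k → ℝ => ℓ j) ⁻¹' {a : ℝ | roundPt a δ (x j) ≠ roundPt a δ (y j)})
          ≤ ENNReal.ofReal (|x j - y j| / δ) := by
        intro j
        rw [hν, stmt8_pi_eval_marginal]
        rcases le_total (x j) (y j) with h | h
        · have h1 := stmt8_oneD hδ h
          rwa [show |x j - y j| = y j - x j by rw [abs_of_nonpos (by linarith), neg_sub]]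
        · have h1 := stmt8_oneD hδ h
          rw [show {a : ℝ | roundPt a δ (x j) ≠ roundPt a δ (y j)} =
              {a : ℝ | roundPt a δ (y j) ≠ roundPt a δ (x j)} by ext a; exact ne_comm]
          rwa [show |x j - y j| = x j - y j by rw [abs_of_nonneg (by linarith)]]
      calc ∑ j : Fin k, ν ((fun ℓ : Fin k → ℝ => ℓ j) ⁻¹'
              {a : ℝ | roundPt a δ (x j) ≠ roundPt a δ (y j)})
          ≤ ∑ j : Fin k, ENNReal.ofReal (|x j - y j| / δ) :=
            Finset.sum_le_sum fun j _ => hterm j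
        _ = ENNReal.ofReal (∑ j : Fin k, |x j - y j| / δ) :=
            (ENNReal.ofReal_sum_of_nonneg (fun j _ => by positivity)).symm
        _ = ENNReal.ofReal ((∑ j : Fin k, |x j - y j|) / δ) := by rw [Finset.sum_div]
    calc (ν ((fun ℓ => (ℓ, x)) ⁻¹' B)).toReal
        ≤ (ν ((fun ℓ => (ℓ, y)) ⁻¹' B) + ENNReal.ofReal ((∑ j, |x j - y j|) / δ)).toReal :=
          ENNReal.toReal_mono (by finiteness) hν1
      _ = (ν ((fun ℓ => (ℓ, y)) ⁻¹' B)).toReal + (∑ j, |x j - y j|) / δ := by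
          rw [ENNReal.toReal_add (by finiteness) ENNReal.ofReal_ne_top,
            ENNReal.toReal_ofReal (by positivity)]
  exact stmt8_lipschitz_diff_le F Fhat hε hδ hPQ hGm (fun x => ENNReal.toReal_nonneg)
    (fun x => htoReal_le_one ν _) hLipG
end

section
/- There exist absolute constants C₁, C₂ such that the following holds in the single-bidder (n = 1) multi-item setting. Let D be a distribution supported on [0,H]^m, let c ∈ (0,1], and let M be an IC and IR mechanism with Rev(M, D) ≥ c·OPT(D). Then there exists an IC and IR mechanism M̂, constructed from M and D alone (oblivious to the true distribution), such that for every distribution D̂ supported on [0,H]^m with Prokhorov distance ‖D − D̂‖_P ≤ ε: Rev(M̂, D̂) ≥ c·(1 − √κ)·OPT(D̂) − C₂·(κ + (√(mLH) + 1)·√κ), where κ = C₁·(mLHε + mL√(Hε)). -/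
open MeasureTheory Set

namespace OneBidder

/-- Measurable-space structure on `Option α`: a set is measurable iff its preimage under
`some` is measurable. -/
instance {α : Type*} [m₀ : MeasurableSpace α] : MeasurableSpace (Option α) :=
  MeasurableSpace.map some m₀

/-- A (randomized) single-bidder multi-item mechanism, represented by the distribution over
allocations in `{0,1}^m` and the expected payment induced on each bid; the bid `none` is
the non-participation symbol `⊥`, yielding no allocation and zero payment. -/
structure Mech (m : ℕ) where
  allocProb : Option (Fin m → ℝ) → (Fin m → Bool) → ℝ
  pay : Option (Fin m → ℝ) → ℝ
  allocProb_nonneg : ∀ b x, 0 ≤ allocProb b x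
  allocProb_sum_one : ∀ b, ∑ x : Fin m → Bool, allocProb b x = 1
  optOut : (allocProb none = fun x => if x = (fun _ => false) then 1 else 0) ∧ pay none = 0
  meas_allocProb : ∀ x, Measurable fun b => allocProb b x
  meas_pay : Measurable pay

variable {m : ℕ}

/-- Expected utility of the bidder with type `t` bidding `b`, for the valuation `v`. -/
def util (v : (Fin m → ℝ) → (Fin m → Bool) → ℝ) (M : Mech m)
    (t : Fin m → ℝ) (b : Option (Fin m → ℝ)) : ℝ :=
  (∑ x : Fin m → Bool, M.allocProb b x * v t x) - M.pay b

/-- Incentive compatibility over types in `[0,H]^m`. -/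
def IsIC (H : ℝ) (v : (Fin m → ℝ) → (Fin m → Bool) → ℝ) (M : Mech m) : Prop :=
  ∀ t t' : Fin m → ℝ, (∀ j, t j ∈ Icc (0:ℝ) H) → (∀ j, t' j ∈ Icc (0:ℝ) H) →
    util v M t (some t') ≤ util v M t (some t)

/-- Individual rationality over types in `[0,H]^m`. -/
def IsIR (H : ℝ) (v : (Fin m → ℝ) → (Fin m → Bool) → ℝ) (M : Mech m) : Prop :=
  ∀ t : Fin m → ℝ, (∀ j, t j ∈ Icc (0:ℝ) H) → 0 ≤ util v M t (some t)

/-- Expected revenue under truthful bidding from `D`. -/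
noncomputable def Rev (M : Mech m) (D : Measure (Fin m → ℝ)) : ℝ :=
  ∫ t, M.pay (some t) ∂D

/-- Optimal revenue over IC and IR mechanisms. -/
noncomputable def OPT (H : ℝ) (v : (Fin m → ℝ) → (Fin m → Bool) → ℝ)
    (D : Measure (Fin m → ℝ)) : ℝ :=
  sSup {r | ∃ M : Mech m, IsIC H v M ∧ IsIR H v M ∧ r = Rev M D}

/-- The distribution is supported on the box `[0,H]^m`. -/
def suppBox (H : ℝ) (μ : Measure (Fin m → ℝ)) : Prop :=
  μ {t | ∀ j, t j ∈ Icc (0:ℝ) H} = 1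

/-- The Prokhorov distance (w.r.t. the `ℓ1` metric) between `P` and `Q` is at most `ε`. -/
def ProkhorovLe {k : ℕ} (P Q : Measure (Fin k → ℝ)) (ε : ℝ) : Prop :=
  ∀ ε' : ℝ, ε < ε' → ∀ A : Set (Fin k → ℝ), MeasurableSet A →
    P A ≤ Q {x | ∃ y ∈ A, (∑ j, |x j - y j|) < ε'} + ENNReal.ofReal ε' ∧
    Q A ≤ P {x | ∃ y ∈ A, (∑ j, |x j - y j|) < ε'} + ENNReal.ofReal ε'

end OneBidder

open OneBidder
namespace Stmt16Aux

open OneBidder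

variable {m : ℕ}

/-- `some` is measurable for the `map` measurable structure on `Option`. -/
lemma measurable_some' {α : Type*} [m₀ : MeasurableSpace α] :
    Measurable (some : α → Option α) := fun _ hs => hs

/-- To check measurability of a function out of `Option α`, it suffices to consider `some`. -/
lemma measurable_option {α γ : Type*} [MeasurableSpace α] [MeasurableSpace γ]
    {f : Option α → γ} (hf : Measurable fun a => f (some a)) : Measurable f :=
  fun _ hs => hf hs

/-- The box `[0,H]^m`. -/
def box (m : ℕ) (H : ℝ) : Set (Fin m → ℝ) := {t | ∀ j, t j ∈ Icc (0:ℝ) H}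

lemma measurableSet_box : MeasurableSet (box m H) := by
  have : box m H = ⋂ j, {t : Fin m → ℝ | t j ∈ Icc (0:ℝ) H} := by
    ext t; simp [box, Set.mem_iInter]
  rw [this]
  exact MeasurableSet.iInter fun j => (measurable_pi_apply j) measurableSet_Icc

lemma zero_mem_box {H : ℝ} (hH : 0 ≤ H) : (fun _ => 0 : Fin m → ℝ) ∈ box m H :=
  fun _ => ⟨le_refl _, hH⟩

/-- A function Lipschitz w.r.t. the ℓ¹ distance is continuous. -/
lemma continuous_of_l1_lipschitz {L : ℝ} (hL : 0 < L) {f : (Fin m → ℝ) → ℝ}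
    (hf : ∀ t t', |f t - f t'| ≤ L * ∑ j, |t j - t' j|) : Continuous f := by
  rw [Metric.continuous_iff]
  intro t ε hε
  refine ⟨ε / (L * m + 1), by positivity, fun t' ht' => ?_⟩
  have h1 : ∀ j, |t' j - t j| ≤ dist t' t := by
    intro j
    have := dist_le_pi_dist t' t j
    simpa [Real.dist_eq] using this
  have h2 : (∑ j, |t' j - t j|) ≤ m * dist t' t := by
    calc (∑ j, |t' j - t j|) ≤ ∑ _j : Fin m, dist t' t := Finset.sum_le_sum fun j _ => h1 j
    _ = m * dist t' t := by simp [Finset.sum_const, mul_comm]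
  have h3 : |f t' - f t| ≤ L * (m * dist t' t) :=
    le_trans (hf t' t) (by nlinarith [dist_nonneg (x := t') (y := t)])
  have hd : dist t' t < ε / (L * m + 1) := ht'
  have : L * (m * dist t' t) < ε := by
    have hmn : (0:ℝ) ≤ (m:ℝ) := Nat.cast_nonneg m
    have := mul_lt_mul_of_pos_left hd (show (0:ℝ) < L * m + 1 by positivity)
    rw [mul_div_cancel₀ _ (show (L * m + 1 : ℝ) ≠ 0 by positivity)] at this
    nlinarith [dist_nonneg (x := t') (y := t)]
  rw [Real.dist_eq]
  exact lt_of_le_of_lt h3 this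

end Stmt16Aux
namespace Stmt16Aux

open OneBidder

variable {m : ℕ} {H L : ℝ} {v : (Fin m → ℝ) → (Fin m → Bool) → ℝ}

lemma sum_alloc_le {N : Mech m} {t : Fin m → ℝ} {b : Option (Fin m → ℝ)} {C : ℝ}
    (hC : ∀ x, v t x ≤ C) : (∑ x, N.allocProb b x * v t x) ≤ C := by
  calc (∑ x, N.allocProb b x * v t x) ≤ ∑ x, N.allocProb b x * C :=
        Finset.sum_le_sum fun x _ => mul_le_mul_of_nonneg_left (hC x) (N.allocProb_nonneg b x)
  _ = (∑ x, N.allocProb b x) * C := by rw [Finset.sum_mul]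
  _ = C := by rw [N.allocProb_sum_one b, one_mul]

lemma sum_alloc_nonneg {N : Mech m} {t : Fin m → ℝ} {b : Option (Fin m → ℝ)}
    (h0 : ∀ x, 0 ≤ v t x) : 0 ≤ ∑ x, N.allocProb b x * v t x :=
  Finset.sum_nonneg fun x _ => mul_nonneg (N.allocProb_nonneg b x) (h0 x)

lemma measurable_pay_some (N : Mech m) : Measurable fun t => N.pay (some t) :=
  N.meas_pay.comp measurable_some'

lemma pay_le_of_IR {N : Mech m} (hIR : IsIR H v N)
    (hv1 : ∀ t x, (∀ j, t j ∈ Icc (0:ℝ) H) → v t x ≤ m * L * H)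
    {t : Fin m → ℝ} (ht : t ∈ box m H) : N.pay (some t) ≤ m * L * H := by
  have h1 := hIR t ht
  have h2 : (∑ x, N.allocProb (some t) x * v t x) ≤ m * L * H :=
    sum_alloc_le fun x => hv1 t x ht
  rw [util] at h1
  linarith

lemma box_ae {D : Measure (Fin m → ℝ)} [IsProbabilityMeasure D] (hbox : suppBox H D) :
    ∀ᵐ t ∂D, t ∈ box m H := by
  have h : D (box m H)ᶜ = 0 := by
    rw [measure_compl measurableSet_box (measure_ne_top _ _)]
    rw [show D (box m H) = 1 from hbox]
    simp
  have heq : {t : Fin m → ℝ | ¬ t ∈ box m H} = (box m H)ᶜ := rfl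
  exact (MeasureTheory.ae_iff).2 (heq ▸ h)

lemma rev_le {N : Mech m} {D : Measure (Fin m → ℝ)} [IsProbabilityMeasure D]
    (hbox : suppBox H D) (hIR : IsIR H v N)
    (hv1 : ∀ t x, (∀ j, t j ∈ Icc (0:ℝ) H) → v t x ≤ m * L * H)
    (hK : 0 ≤ m * L * H) : Rev N D ≤ m * L * H := by
  by_cases hint : Integrable (fun t => N.pay (some t)) D
  · have hae : ∀ᵐ t ∂D, N.pay (some t) ≤ m * L * H := by
      filter_upwards [box_ae hbox] with t ht
      exact pay_le_of_IR hIR hv1 ht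
    calc Rev N D ≤ ∫ _t, m * L * H ∂D := integral_mono_ae hint (integrable_const _) hae
    _ = m * L * H := by simp
  · rw [Rev, integral_undef hint]; exact hK

/-- The trivial mechanism: no allocation, no payment. -/
def triv (m : ℕ) : Mech m where
  allocProb := fun _ x => if x = (fun _ => false) then 1 else 0
  pay := fun _ => 0
  allocProb_nonneg := by intro b x; split <;> norm_num
  allocProb_sum_one := by intro b; simp
  optOut := ⟨rfl, rfl⟩
  meas_allocProb := fun _ => measurable_const
  meas_pay := measurable_const

lemma util_triv (t : Fin m → ℝ) (b : Option (Fin m → ℝ)) :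
    util v (triv m) t b = v t (fun _ => false) := by
  simp [util, triv]

lemma triv_IC : IsIC H v (triv m) := by
  intro t t' _ _; rw [util_triv, util_triv]

lemma triv_IR (hv0 : ∀ t x, (∀ j, t j ∈ Icc (0:ℝ) H) → 0 ≤ v t x) : IsIR H v (triv m) := by
  intro t ht; rw [util_triv]; exact hv0 t _ ht

lemma rev_triv (D : Measure (Fin m → ℝ)) : Rev (triv m) D = 0 := by
  simp [Rev, triv]

section OptFacts

lemma zero_mem_revSet (hv0 : ∀ t x, (∀ j, t j ∈ Icc (0:ℝ) H) → 0 ≤ v t x)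
    {D : Measure (Fin m → ℝ)} :
    (0:ℝ) ∈ {r | ∃ N : Mech m, IsIC H v N ∧ IsIR H v N ∧ r = Rev N D} :=
  ⟨triv m, triv_IC, triv_IR hv0, (rev_triv D).symm⟩

lemma revSet_bddAbove (hv1 : ∀ t x, (∀ j, t j ∈ Icc (0:ℝ) H) → v t x ≤ m * L * H)
    (hK : 0 ≤ m * L * H) {D : Measure (Fin m → ℝ)} [IsProbabilityMeasure D]
    (hbox : suppBox H D) :
    BddAbove {r | ∃ N : Mech m, IsIC H v N ∧ IsIR H v N ∧ r = Rev N D} := by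
  refine ⟨m * L * H, fun r hr => ?_⟩
  obtain ⟨N, _, hIR, rfl⟩ := hr
  exact rev_le hbox hIR hv1 hK

lemma opt_nonneg (hv0 : ∀ t x, (∀ j, t j ∈ Icc (0:ℝ) H) → 0 ≤ v t x)
    (hv1 : ∀ t x, (∀ j, t j ∈ Icc (0:ℝ) H) → v t x ≤ m * L * H)
    (hK : 0 ≤ m * L * H) {D : Measure (Fin m → ℝ)} [IsProbabilityMeasure D]
    (hbox : suppBox H D) : 0 ≤ OPT H v D :=
  le_csSup (revSet_bddAbove hv1 hK hbox) (zero_mem_revSet hv0)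

lemma opt_le (hv0 : ∀ t x, (∀ j, t j ∈ Icc (0:ℝ) H) → 0 ≤ v t x)
    (hv1 : ∀ t x, (∀ j, t j ∈ Icc (0:ℝ) H) → v t x ≤ m * L * H)
    (hK : 0 ≤ m * L * H) {D : Measure (Fin m → ℝ)} [IsProbabilityMeasure D]
    (hbox : suppBox H D) : OPT H v D ≤ m * L * H :=
  csSup_le ⟨0, zero_mem_revSet hv0⟩ (by rintro r ⟨N, _, hIR, rfl⟩; exact rev_le hbox hIR hv1 hK)

lemma rev_le_opt (hv1 : ∀ t x, (∀ j, t j ∈ Icc (0:ℝ) H) → v t x ≤ m * L * H)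
    (hK : 0 ≤ m * L * H) {D : Measure (Fin m → ℝ)} [IsProbabilityMeasure D]
    (hbox : suppBox H D) {N : Mech m} (hIC : IsIC H v N) (hIR : IsIR H v N) :
    Rev N D ≤ OPT H v D :=
  le_csSup (revSet_bddAbove hv1 hK hbox) ⟨N, hIC, hIR, rfl⟩

end OptFacts

end Stmt16Aux
namespace Stmt16Aux

open OneBidder

/-- Transfer of integrals of bounded nonnegative functions through a (one-sided)
Prokhorov-type inequality, given a pointwise transfer property. -/
lemma prokhorov_integral_le {m : ℕ}
    (μ ν : Measure (Fin m → ℝ)) [IsProbabilityMeasure μ] [IsProbabilityMeasure ν]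
    {g h : (Fin m → ℝ) → ℝ} (hg : Measurable g) (hh : Measurable h)
    {R E ε' : ℝ} (hR : 0 ≤ R) (hE : 0 ≤ E) (hε' : 0 < ε')
    (hg0 : ∀ t, 0 ≤ g t) (hgR : ∀ t, g t ≤ R)
    (hh0 : ∀ t, 0 ≤ h t) (hhR : ∀ t, h t ≤ R)
    {S : Set (Fin m → ℝ)} (hS : MeasurableSet S) (hνS : ν S = 1)
    (htrans : ∀ t t', t' ∈ S → (∑ j, |t' j - t j|) < ε' → g t - E ≤ h t')
    (hprok : ∀ A : Set (Fin m → ℝ), MeasurableSet A →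
      μ A ≤ ν {x | ∃ y ∈ A, (∑ j, |x j - y j|) < ε'} + ENNReal.ofReal ε') :
    ∫ t, g t ∂μ ≤ (∫ t, h t ∂ν) + E + R * ε' := by
  have hνSc : ν Sᶜ = 0 := by
    rw [measure_compl hS (measure_ne_top _ _), hνS]; simp
  -- pointwise measure comparison
  have key : ∀ r : ℝ, 0 < r → r ≤ R →
      μ {a | r < g a} ≤ ν {a | r < h a + E} + ENNReal.ofReal ε' := by
    intro r _ _
    have hA : MeasurableSet {a : Fin m → ℝ | r < g a} := hg measurableSet_Ioi
    refine le_trans (hprok _ hA) (add_le_add ?_ le_rfl)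
    have hsub : {x | ∃ y ∈ {a : Fin m → ℝ | r < g a}, (∑ j, |x j - y j|) < ε'}
        ⊆ {a | r < h a + E} ∪ Sᶜ := by
      rintro x ⟨y, hy, hd⟩
      by_cases hxS : x ∈ S
      · left
        have := htrans y x hxS hd
        have hyg : r < g y := hy
        simp only [Set.mem_setOf_eq]
        linarith
      · right; exact hxS
    calc ν _ ≤ ν ({a | r < h a + E} ∪ Sᶜ) := measure_mono hsub
    _ ≤ ν {a | r < h a + E} + ν Sᶜ := measure_union_le _ _
    _ = ν {a | r < h a + E} := by rw [hνSc, add_zero]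
  -- lintegral comparison
  have I1 : ∫⁻ t, ENNReal.ofReal (g t) ∂μ = ∫⁻ r in Set.Ioi 0, μ {a | r < g a} :=
    lintegral_eq_lintegral_meas_lt μ (Filter.Eventually.of_forall hg0) hg.aemeasurable
  have I6 : ∫⁻ r in Set.Ioi 0, ν {a | r < h a + E} = ∫⁻ t, ENNReal.ofReal (h t + E) ∂ν :=
    (lintegral_eq_lintegral_meas_lt ν
      (Filter.Eventually.of_forall fun t => by simp only [Pi.zero_apply]; linarith [hh0 t]) (hh.add_const E).aemeasurable).symm
  have I2 : ∫⁻ r in Set.Ioi 0, μ {a | r < g a}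
      ≤ ∫⁻ r in Set.Ioi 0, (Set.Ioc (0:ℝ) R).indicator
          (fun r => ν {a | r < h a + E} + ENNReal.ofReal ε') r := by
    apply lintegral_mono_ae
    refine (ae_restrict_iff' measurableSet_Ioi).2 (Filter.Eventually.of_forall fun r hr => ?_)
    rcases le_or_gt r R with hrR | hrR
    · rw [Set.indicator_of_mem (Set.mem_Ioc.2 ⟨hr, hrR⟩)]
      exact key r hr hrR
    · have : {a : Fin m → ℝ | r < g a} = ∅ := by
        ext a; simp only [Set.mem_setOf_eq, Set.mem_empty_iff_false, iff_false, not_lt]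
        exact le_trans (hgR a) hrR.le
      rw [this]
      simp
  have I3 : ∫⁻ r in Set.Ioi 0, (Set.Ioc (0:ℝ) R).indicator
        (fun r => ν {a | r < h a + E} + ENNReal.ofReal ε') r
      = ∫⁻ r in Set.Ioc 0 R, (ν {a | r < h a + E} + ENNReal.ofReal ε') := by
    rw [lintegral_indicator measurableSet_Ioc, Measure.restrict_restrict measurableSet_Ioc]
    congr 1
    rw [Set.inter_eq_self_of_subset_left Set.Ioc_subset_Ioi_self]
  have I4 : ∫⁻ r in Set.Ioc 0 R, (ν {a | r < h a + E} + ENNReal.ofReal ε')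
      ≤ (∫⁻ r in Set.Ioi 0, ν {a | r < h a + E}) + ENNReal.ofReal (ε' * R) := by
    rw [lintegral_add_right _ measurable_const]
    refine add_le_add (lintegral_mono_set Set.Ioc_subset_Ioi_self) ?_
    rw [setLIntegral_const, Real.volume_Ioc, ← ENNReal.ofReal_mul hε'.le]
    simp
  have I7 : ∫⁻ t, ENNReal.ofReal (h t + E) ∂ν
      = (∫⁻ t, ENNReal.ofReal (h t) ∂ν) + ENNReal.ofReal E := by
    have : ∀ t, ENNReal.ofReal (h t + E) = ENNReal.ofReal (h t) + ENNReal.ofReal E :=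
      fun t => ENNReal.ofReal_add (hh0 t) hE
    simp_rw [this]
    rw [lintegral_add_right _ measurable_const, lintegral_const]
    simp
  have main : ∫⁻ t, ENNReal.ofReal (g t) ∂μ
      ≤ (∫⁻ t, ENNReal.ofReal (h t) ∂ν) + ENNReal.ofReal E + ENNReal.ofReal (ε' * R) := by
    calc ∫⁻ t, ENNReal.ofReal (g t) ∂μ = _ := I1
    _ ≤ _ := I2
    _ = _ := I3
    _ ≤ _ := I4
    _ = (∫⁻ t, ENNReal.ofReal (h t + E) ∂ν) + ENNReal.ofReal (ε' * R) := by rw [I6]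
    _ = _ := by rw [I7]
  -- back to real integrals
  have hfin : (∫⁻ t, ENNReal.ofReal (h t) ∂ν) ≤ ENNReal.ofReal R := by
    calc (∫⁻ t, ENNReal.ofReal (h t) ∂ν) ≤ ∫⁻ _, ENNReal.ofReal R ∂ν :=
          lintegral_mono fun t => ENNReal.ofReal_le_ofReal (hhR t)
    _ = ENNReal.ofReal R := by rw [lintegral_const]; simp
  have hfin' : (∫⁻ t, ENNReal.ofReal (h t) ∂ν) ≠ ⊤ :=
    ne_top_of_le_ne_top ENNReal.ofReal_ne_top hfin
  have hGeq : ∫ t, g t ∂μ = (∫⁻ t, ENNReal.ofReal (g t) ∂μ).toReal :=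
    integral_eq_lintegral_of_nonneg_ae (Filter.Eventually.of_forall hg0)
      hg.aestronglyMeasurable
  have hHeq : ∫ t, h t ∂ν = (∫⁻ t, ENNReal.ofReal (h t) ∂ν).toReal :=
    integral_eq_lintegral_of_nonneg_ae (Filter.Eventually.of_forall hh0)
      hh.aestronglyMeasurable
  rw [hGeq, hHeq]
  have hRHSne : (∫⁻ t, ENNReal.ofReal (h t) ∂ν) + ENNReal.ofReal E + ENNReal.ofReal (ε' * R)
      ≠ ⊤ := by
    refine ENNReal.add_ne_top.2 ⟨ENNReal.add_ne_top.2 ⟨hfin', ENNReal.ofReal_ne_top⟩,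
      ENNReal.ofReal_ne_top⟩
  calc (∫⁻ t, ENNReal.ofReal (g t) ∂μ).toReal
      ≤ ((∫⁻ t, ENNReal.ofReal (h t) ∂ν) + ENNReal.ofReal E + ENNReal.ofReal (ε' * R)).toReal :=
        ENNReal.toReal_mono hRHSne main
  _ = (∫⁻ t, ENNReal.ofReal (h t) ∂ν).toReal + E + R * ε' := by
      rw [ENNReal.toReal_add (ENNReal.add_ne_top.2 ⟨hfin', ENNReal.ofReal_ne_top⟩)
        ENNReal.ofReal_ne_top, ENNReal.toReal_add hfin' ENNReal.ofReal_ne_top,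
        ENNReal.toReal_ofReal hE, ENNReal.toReal_ofReal (by positivity)]
      ring

end Stmt16Aux
namespace Stmt16Aux

open OneBidder

variable {m : ℕ}

/-- The positive part of the payment of `N` at bid `b`. -/
noncomputable def qq (N : Mech m) (b : Fin m → ℝ) : ℝ := max (N.pay (some b)) 0

/-- Expected value of type `t` for the allocation of `N` at bid `b`. -/
def svv (v : (Fin m → ℝ) → (Fin m → Bool) → ℝ) (N : Mech m) (t b : Fin m → ℝ) : ℝ :=
  ∑ x, N.allocProb (some b) x * v t x

/-- Discounted-menu objective: value minus discounted (positive-part) price. -/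
noncomputable def gg (v : (Fin m → ℝ) → (Fin m → Bool) → ℝ) (η : ℝ) (N : Mech m)
    (b t : Fin m → ℝ) : ℝ := svv v N t b - (1 - η) * qq N b

lemma util_eq_svv (v : (Fin m → ℝ) → (Fin m → Bool) → ℝ) (N : Mech m) (t b : Fin m → ℝ) :
    util v N t (some b) = svv v N t b - N.pay (some b) := rfl

lemma qq_nonneg (N : Mech m) (b : Fin m → ℝ) : 0 ≤ qq N b := le_max_right _ _

lemma qq_le {H L : ℝ} {v : (Fin m → ℝ) → (Fin m → Bool) → ℝ} {N : Mech m}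
    (hIR : IsIR H v N) (hv1 : ∀ t x, (∀ j, t j ∈ Icc (0:ℝ) H) → v t x ≤ m * L * H)
    (hK : 0 ≤ m * L * H) {b : Fin m → ℝ} (hb : b ∈ box m H) : qq N b ≤ m * L * H :=
  max_le (pay_le_of_IR hIR hv1 hb) hK

lemma sum_abs_comm (t t' : Fin m → ℝ) : (∑ j, |t j - t' j|) = ∑ j, |t' j - t j| :=
  Finset.sum_congr rfl fun j _ => abs_sub_comm _ _

lemma svv_lip {L : ℝ} {v : (Fin m → ℝ) → (Fin m → Bool) → ℝ}
    (hlip : ∀ t t' x, |v t x - v t' x| ≤ L * ∑ j, |t j - t' j|)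
    (N : Mech m) (t t' b : Fin m → ℝ) :
    |svv v N t b - svv v N t' b| ≤ L * ∑ j, |t j - t' j| := by
  have h1 : svv v N t b - svv v N t' b = ∑ x, N.allocProb (some b) x * (v t x - v t' x) := by
    rw [svv, svv, ← Finset.sum_sub_distrib]
    exact Finset.sum_congr rfl fun x _ => by ring
  rw [h1]
  calc |∑ x, N.allocProb (some b) x * (v t x - v t' x)|
      ≤ ∑ x, |N.allocProb (some b) x * (v t x - v t' x)| := Finset.abs_sum_le_sum_abs _ _
  _ ≤ ∑ x, N.allocProb (some b) x * (L * ∑ j, |t j - t' j|) := by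
      refine Finset.sum_le_sum fun x _ => ?_
      rw [abs_mul, abs_of_nonneg (N.allocProb_nonneg _ x)]
      exact mul_le_mul_of_nonneg_left (hlip t t' x) (N.allocProb_nonneg _ x)
  _ = (∑ x, N.allocProb (some b) x) * (L * ∑ j, |t j - t' j|) := by rw [Finset.sum_mul]
  _ = L * ∑ j, |t j - t' j| := by rw [N.allocProb_sum_one, one_mul]

lemma gg_lip {L : ℝ} {v : (Fin m → ℝ) → (Fin m → Bool) → ℝ}
    (hlip : ∀ t t' x, |v t x - v t' x| ≤ L * ∑ j, |t j - t' j|)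
    (η : ℝ) (N : Mech m) (b t t' : Fin m → ℝ) :
    |gg v η N b t - gg v η N b t'| ≤ L * ∑ j, |t j - t' j| := by
  have : gg v η N b t - gg v η N b t' = svv v N t b - svv v N t' b := by
    rw [gg, gg]; ring
  rw [this]; exact svv_lip hlip N t t' b

lemma gg_cont {L : ℝ} (hL : 0 < L) {v : (Fin m → ℝ) → (Fin m → Bool) → ℝ}
    (hlip : ∀ t t' x, |v t x - v t' x| ≤ L * ∑ j, |t j - t' j|)
    (η : ℝ) (N : Mech m) (b : Fin m → ℝ) : Continuous (fun t => gg v η N b t) :=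
  continuous_of_l1_lipschitz hL (gg_lip hlip η N b)

lemma svv_nonneg {H : ℝ} {v : (Fin m → ℝ) → (Fin m → Bool) → ℝ}
    (hv0 : ∀ t x, (∀ j, t j ∈ Icc (0:ℝ) H) → 0 ≤ v t x)
    (N : Mech m) {t : Fin m → ℝ} (ht : t ∈ box m H) (b : Fin m → ℝ) :
    0 ≤ svv v N t b := sum_alloc_nonneg fun x => hv0 t x ht

lemma svv_le_box {H L : ℝ} {v : (Fin m → ℝ) → (Fin m → Bool) → ℝ}
    (hv1 : ∀ t x, (∀ j, t j ∈ Icc (0:ℝ) H) → v t x ≤ m * L * H)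
    (N : Mech m) {t : Fin m → ℝ} (ht : t ∈ box m H) (b : Fin m → ℝ) :
    svv v N t b ≤ m * L * H := sum_alloc_le fun x => hv1 t x ht

/-- Values are bounded above by the (finite) max of `v t` over allocations. -/
lemma svv_le_sup (v : (Fin m → ℝ) → (Fin m → Bool) → ℝ) (N : Mech m) (t b : Fin m → ℝ) :
    svv v N t b ≤ Finset.univ.sup' ⟨(fun _ => false), Finset.mem_univ _⟩ (fun x => v t x) :=
  sum_alloc_le fun x => Finset.le_sup' _ (Finset.mem_univ x)

lemma gg_le_svv {η : ℝ} (hη1 : η ≤ 1) (v : (Fin m → ℝ) → (Fin m → Bool) → ℝ)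
    (N : Mech m) (b t : Fin m → ℝ) : gg v η N b t ≤ svv v N t b := by
  rw [gg]
  have : 0 ≤ (1 - η) * qq N b := mul_nonneg (by linarith) (qq_nonneg N b)
  linarith

end Stmt16Aux
namespace Stmt16Aux

open OneBidder

set_option maxHeartbeats 2000000

/-- Core robustification: from an IC, IR mechanism `N`, build an IC, IR mechanism whose
revenue under any distribution `ν` that is Prokhorov-close to `μ` nearly matches the
(η-discounted) revenue of `N` under `μ`. -/
lemma core {m : ℕ} {H L η ζ : ℝ} (hH : 0 < H) (hL : 0 < L)
    (hη : 0 < η) (hη1 : η ≤ 1) (hζ : 0 < ζ)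
    {v : (Fin m → ℝ) → (Fin m → Bool) → ℝ}
    (hv0 : ∀ t x, (∀ j, t j ∈ Icc (0:ℝ) H) → 0 ≤ v t x)
    (hv1 : ∀ t x, (∀ j, t j ∈ Icc (0:ℝ) H) → v t x ≤ m * L * H)
    (hlip : ∀ t t' x, |v t x - v t' x| ≤ L * ∑ j, |t j - t' j|)
    (N : Mech m) (hIC : IsIC H v N) (hIR : IsIR H v N) :
    ∃ Nh : Mech m, IsIC H v Nh ∧ IsIR H v Nh ∧
      ∀ (μ ν : Measure (Fin m → ℝ)), IsProbabilityMeasure μ → IsProbabilityMeasure ν →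
        suppBox H μ → suppBox H ν → ∀ ε' : ℝ, 0 < ε' →
        (∀ A : Set (Fin m → ℝ), MeasurableSet A →
          μ A ≤ ν {x | ∃ y ∈ A, (∑ j, |x j - y j|) < ε'} + ENNReal.ofReal ε') →
        (1 - η) * Rev N μ - (2 * L * min ε' (m * H) + ζ) / η - m * L * H * ε' - ζ
          ≤ Rev Nh ν := by
  classical
  have hK : (0:ℝ) ≤ m * L * H := by positivity
  -- the sup of the discounted menu utilities
  haveI hboxne : Nonempty ↥(box m H) := ⟨⟨fun _ => 0, zero_mem_box hH.le⟩⟩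
  have hbdd : ∀ t, BddAbove (Set.range fun b : ↥(box m H) => gg v η N (↑b) t) := by
    intro t
    refine ⟨Finset.univ.sup' ⟨(fun _ => false), Finset.mem_univ _⟩ (fun x => v t x), ?_⟩
    rintro r ⟨b, rfl⟩
    exact le_trans (gg_le_svv hη1 v N _ t) (svv_le_sup v N t _)
  set hsup : (Fin m → ℝ) → ℝ := fun t => ⨆ b : ↥(box m H), gg v η N (↑b) t with hsup_def
  have hle_hsup : ∀ (t : Fin m → ℝ) (b : Fin m → ℝ), b ∈ box m H →
      gg v η N b t ≤ hsup t := fun t b hb => le_ciSup (hbdd t) ⟨b, hb⟩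
  have hsup_lip_one : ∀ t t', hsup t - hsup t' ≤ L * ∑ j, |t j - t' j| := by
    intro t t'
    have h1 : hsup t ≤ hsup t' + L * ∑ j, |t j - t' j| := by
      refine ciSup_le fun b => ?_
      have h2 := gg_lip hlip η N (↑b) t t'
      have h3 := hle_hsup t' (↑b) b.2
      have := abs_le.1 h2
      linarith [this.2]
    linarith
  have hsup_lip : ∀ t t', |hsup t - hsup t'| ≤ L * ∑ j, |t j - t' j| := by
    intro t t'
    rw [abs_le]
    constructor
    · have := hsup_lip_one t' t
      rw [sum_abs_comm t' t] at this
      linarith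
    · exact hsup_lip_one t t'
  have hsup_cont : Continuous hsup := continuous_of_l1_lipschitz hL hsup_lip
  -- finite subcover of near-maximizer regions
  have hcompact : IsCompact (box m H) := by
    have : box m H = Set.pi Set.univ (fun _ : Fin m => Icc (0:ℝ) H) := by
      ext t; simp [box, Set.mem_pi, Pi.le_def, forall_and]
    rw [this]
    exact isCompact_univ_pi fun _ => isCompact_Icc
  have hUopen : ∀ b : ↥(box m H), IsOpen {t | hsup t - ζ < gg v η N (↑b) t} := fun b =>
    isOpen_lt (hsup_cont.sub continuous_const) (gg_cont hL hlip η N (↑b))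
  have hcover : box m H ⊆ ⋃ b : ↥(box m H), {t | hsup t - ζ < gg v η N (↑b) t} := by
    intro t _
    have h1 : hsup t - ζ < hsup t := by linarith
    obtain ⟨b, hb⟩ := exists_lt_of_lt_ciSup h1
    exact Set.mem_iUnion.2 ⟨b, hb⟩
  obtain ⟨F, hF⟩ := hcompact.elim_finite_subcover _ hUopen hcover
  set z₀ : Fin m → ℝ := fun _ => 0 with hz₀
  set lst : List (Fin m → ℝ) := F.toList.map Subtype.val with hlst
  have hlst_box : ∀ b ∈ lst, b ∈ box m H := by
    intro b hb
    rw [hlst, List.mem_map] at hb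
    obtain ⟨a, _, rfl⟩ := hb
    exact a.2
  have hcov' : ∀ t ∈ box m H, ∃ b ∈ lst, hsup t - ζ < gg v η N b t := by
    intro t ht
    obtain ⟨i, hi⟩ := Set.mem_iUnion.1 (hF ht)
    obtain ⟨hiF, hti⟩ := Set.mem_iUnion.1 hi
    exact ⟨↑i, by rw [hlst, List.mem_map]; exact ⟨i, Finset.mem_toList.2 hiF, rfl⟩, hti⟩
  have hget_mem : ∀ k, k < lst.length → lst.getD k z₀ ∈ lst := by
    intro k hk
    rw [List.getD_eq_getElem lst z₀ hk]
    exact List.getElem_mem hk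
  -- existence of an exact argmax index
  have hexists : ∀ t : Fin m → ℝ, ∃ k, k < lst.length ∧
      ∀ j, j < lst.length → gg v η N (lst.getD j z₀) t ≤ gg v η N (lst.getD k z₀) t := by
    intro t
    have hne : lst ≠ [] := by
      obtain ⟨b, hb, _⟩ := hcov' z₀ (zero_mem_box hH.le)
      exact List.ne_nil_of_mem hb
    cases harg : lst.argmax (fun b => gg v η N b t) with
    | none => exact absurd (List.argmax_eq_none.1 harg) hne
    | some a =>
      have ha : a ∈ lst.argmax (fun b => gg v η N b t) := harg ▸ rfl
      have hamem : a ∈ lst := List.argmax_mem ha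
      obtain ⟨⟨k, hk⟩, hka⟩ := List.mem_iff_get.1 hamem
      refine ⟨k, hk, fun j hj => ?_⟩
      have h1 : gg v η N (lst.getD j z₀) t ≤ gg v η N a t :=
        List.le_of_mem_argmax (hget_mem j hj) ha
      have hgetka : lst.getD k z₀ = a := by
        rw [List.getD_eq_getElem lst z₀ hk, ← hka, List.get_eq_getElem]
      rw [hgetka]
      exact h1
  set idx : (Fin m → ℝ) → ℕ := fun t => Nat.find (hexists t) with hidx_def
  set φ : (Fin m → ℝ) → (Fin m → ℝ) := fun t => lst.getD (idx t) z₀ with hφ_def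
  have hidx_spec : ∀ t, idx t < lst.length ∧
      ∀ j, j < lst.length → gg v η N (lst.getD j z₀) t ≤ gg v η N (φ t) t :=
    fun t => Nat.find_spec (hexists t)
  have hφ_mem : ∀ t, φ t ∈ lst := fun t => hget_mem _ (hidx_spec t).1
  have hφ_box : ∀ t, φ t ∈ box m H := fun t => hlst_box _ (hφ_mem t)
  have hφ_max : ∀ t, ∀ b ∈ lst, gg v η N b t ≤ gg v η N (φ t) t := by
    intro t b hb
    obtain ⟨⟨k, hk⟩, hkb⟩ := List.mem_iff_get.1 hb
    have h2 := (hidx_spec t).2 k hk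
    have hgetkb : lst.getD k z₀ = b := by
      rw [List.getD_eq_getElem lst z₀ hk, ← hkb, List.get_eq_getElem]
    rwa [hgetkb] at h2
  -- measurability of the selection
  have hidx_meas : Measurable idx := by
    apply measurable_to_countable'
    intro k
    have hset : idx ⁻¹' {k} = {t | (k < lst.length ∧
        ∀ j, j < lst.length → gg v η N (lst.getD j z₀) t ≤ gg v η N (lst.getD k z₀) t) ∧
        ∀ n, n < k → ¬ (n < lst.length ∧
        ∀ j, j < lst.length → gg v η N (lst.getD j z₀) t ≤ gg v η N (lst.getD n z₀) t)} := by
      ext t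
      simp only [Set.mem_preimage, Set.mem_singleton_iff, Set.mem_setOf_eq, hidx_def]
      rw [Nat.find_eq_iff (hexists t)]
    rw [hset]
    have hP : ∀ n : ℕ, MeasurableSet {t : Fin m → ℝ | n < lst.length ∧
        ∀ j, j < lst.length → gg v η N (lst.getD j z₀) t ≤ gg v η N (lst.getD n z₀) t} := by
      intro n
      by_cases hn : n < lst.length
      · have : {t : Fin m → ℝ | n < lst.length ∧
            ∀ j, j < lst.length → gg v η N (lst.getD j z₀) t ≤ gg v η N (lst.getD n z₀) t}
            = ⋂ (j : ℕ) (_ : j < lst.length),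
              {t | gg v η N (lst.getD j z₀) t ≤ gg v η N (lst.getD n z₀) t} := by
          ext t
          simp only [Set.mem_setOf_eq, Set.mem_iInter]
          exact ⟨fun h j hj => h.2 j hj, fun h => ⟨hn, h⟩⟩
        rw [this]
        exact MeasurableSet.iInter fun j => MeasurableSet.iInter fun _ =>
          measurableSet_le (gg_cont hL hlip η N _).measurable (gg_cont hL hlip η N _).measurable
      · have : {t : Fin m → ℝ | n < lst.length ∧
            ∀ j, j < lst.length → gg v η N (lst.getD j z₀) t ≤ gg v η N (lst.getD n z₀) t}
            = ∅ := by
          ext t; simp [hn]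
        rw [this]; exact MeasurableSet.empty
    have : {t : Fin m → ℝ | (k < lst.length ∧
        ∀ j, j < lst.length → gg v η N (lst.getD j z₀) t ≤ gg v η N (lst.getD k z₀) t) ∧
        ∀ n, n < k → ¬ (n < lst.length ∧
        ∀ j, j < lst.length → gg v η N (lst.getD j z₀) t ≤ gg v η N (lst.getD n z₀) t)}
        = {t : Fin m → ℝ | k < lst.length ∧
        ∀ j, j < lst.length → gg v η N (lst.getD j z₀) t ≤ gg v η N (lst.getD k z₀) t}
        ∩ ⋂ (n : ℕ) (_ : n < k), {t : Fin m → ℝ | n < lst.length ∧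
        ∀ j, j < lst.length → gg v η N (lst.getD j z₀) t ≤ gg v η N (lst.getD n z₀) t}ᶜ := by
      ext t
      simp only [Set.mem_setOf_eq, Set.mem_inter_iff, Set.mem_iInter, Set.mem_compl_iff]
    rw [this]
    exact (hP k).inter (MeasurableSet.iInter fun n => MeasurableSet.iInter fun _ => (hP n).compl)
  have hcomp : ∀ (G : ℕ → ℝ), Measurable fun t => G (idx t) := fun G =>
    Measurable.comp measurable_from_top hidx_meas
  -- the new mechanism
  let Nh : Mech m :=
    { allocProb := fun ob x =>
        ob.elim (if x = (fun _ => false) then 1 else 0) (fun t => N.allocProb (some (φ t)) x)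
      pay := fun ob => ob.elim 0 (fun t => (1 - η) * qq N (φ t) - ζ)
      allocProb_nonneg := by
        intro ob x
        cases ob with
        | none => dsimp; split <;> norm_num
        | some t => exact N.allocProb_nonneg _ x
      allocProb_sum_one := by
        intro ob
        cases ob with
        | none => simp
        | some t => exact N.allocProb_sum_one _
      optOut := ⟨rfl, rfl⟩
      meas_allocProb := fun x =>
        measurable_option (hcomp (fun k => N.allocProb (some (lst.getD k z₀)) x))
      meas_pay :=
        measurable_option ((hcomp (fun k => (1 - η) * qq N (lst.getD k z₀) - ζ))) }
  have hutil : ∀ t b : Fin m → ℝ, util v Nh t (some b) = gg v η N (φ b) t + ζ := by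
    intro t b
    show (∑ x, N.allocProb (some (φ b)) x * v t x) - ((1 - η) * qq N (φ b) - ζ) = _
    rw [gg, svv]; ring
  have hpay : ∀ t : Fin m → ℝ, Nh.pay (some t) = (1 - η) * qq N (φ t) - ζ := fun t => rfl
  -- IC
  have hNhIC : IsIC H v Nh := by
    intro t t' _ _
    rw [hutil, hutil]
    exact add_le_add (hφ_max t _ (hφ_mem t')) le_rfl
  -- IR
  have hNhIR : IsIR H v Nh := by
    intro t ht
    rw [hutil]
    obtain ⟨b, hblst, hbgt⟩ := hcov' t ht
    have h1 : gg v η N b t ≤ gg v η N (φ t) t := hφ_max t b hblst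
    have h2 : gg v η N t t ≤ hsup t := hle_hsup t t ht
    have h3 : 0 ≤ gg v η N t t := by
      rw [gg]
      rcases le_or_gt (N.pay (some t)) 0 with hpt | hpt
      · rw [qq, max_eq_right hpt, mul_zero, sub_zero]
        exact svv_nonneg hv0 N ht t
      · rw [qq, max_eq_left hpt.le]
        have h4 := hIR t ht
        rw [util_eq_svv] at h4
        nlinarith [hpt.le]
    linarith
  refine ⟨Nh, hNhIC, hNhIR, ?_⟩
  -- revenue transfer
  intro μ ν hμP hνP hμbox hνbox ε' hε' hprok
  -- pointwise price transfer
  have htransfer : ∀ t th : Fin m → ℝ, t ∈ box m H → th ∈ box m H →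
      (1 - η) * qq N t - (2 * L * (∑ j, |th j - t j|) + ζ) / η ≤ (1 - η) * qq N (φ th) := by
    intro t th ht hth
    set δ : ℝ := ∑ j, |th j - t j| with hδdef
    have hδ0 : 0 ≤ δ := Finset.sum_nonneg fun j _ => abs_nonneg _
    have hquot : 0 ≤ (2 * L * δ + ζ) / η := by positivity
    have h1η : 0 ≤ 1 - η := by linarith
    rcases le_or_gt (N.pay (some t)) 0 with hpt | hpt
    · have : qq N t = 0 := max_eq_right hpt
      rw [this, mul_zero]
      have := mul_nonneg h1η (qq_nonneg N (φ th))
      linarith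
    · have hqt : qq N t = N.pay (some t) := max_eq_left hpt.le
      -- (A) the chosen entry nearly beats the entry of t
      obtain ⟨b, hblst, hbgt⟩ := hcov' th hth
      have hA : gg v η N t th - ζ ≤ gg v η N (φ th) th := by
        have h1 : gg v η N b th ≤ gg v η N (φ th) th := hφ_max th b hblst
        have h2 : gg v η N t th ≤ hsup th := hle_hsup th t ht
        linarith
      -- (B) IC of N bounds the value of the chosen entry
      have hB : svv v N th (φ th) - N.pay (some (φ th)) ≤ svv v N th th - N.pay (some th) := by
        have := hIC th (φ th) hth (hφ_box th)
        rw [util_eq_svv, util_eq_svv] at this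
        exact this
      have hBq : gg v η N (φ th) th ≤
          (svv v N th th - N.pay (some th)) + η * qq N (φ th) := by
        rw [gg]
        have hple : N.pay (some (φ th)) ≤ qq N (φ th) := le_max_left _ _
        nlinarith [qq_nonneg N (φ th)]
      -- (C) lower bound for the entry of t
      have hlip1 : |svv v N th t - svv v N t t| ≤ L * δ := by
        have := svv_lip hlip N th t t
        rw [← hδdef] at this
        exact this
      have hC : (svv v N t t - N.pay (some t)) + η * N.pay (some t) - L * δ
          ≤ gg v η N t th := by
        rw [gg, hqt]
        have := (abs_le.1 hlip1).1
        nlinarith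
      -- (D) utilities are Lipschitz
      have hlip2 : |svv v N th th - svv v N t th| ≤ L * δ := by
        have := svv_lip hlip N th t th
        rw [← hδdef] at this
        exact this
      have hD : svv v N th th - N.pay (some th) ≤ (svv v N t t - N.pay (some t)) + L * δ := by
        have h5 := hIC t th ht hth
        rw [util_eq_svv, util_eq_svv] at h5
        have := (abs_le.1 hlip2).2
        linarith
      -- combine
      have hcomb : η * qq N (φ th) ≥ η * N.pay (some t) - 2 * L * δ - ζ := by linarith
      have hdiv : N.pay (some t) - (2 * L * δ + ζ) / η ≤ qq N (φ th) := by
        have h8 : N.pay (some t) - qq N (φ th) ≤ (2 * L * δ + ζ) / η := by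
          rw [le_div_iff₀ hη]
          have h9 : (N.pay (some t) - qq N (φ th)) * η
              = η * N.pay (some t) - η * qq N (φ th) := by ring
          linarith [h9.le, h9.ge]
        linarith
      rw [hqt]
      have h10 : (1 - η) * (N.pay (some t) - (2 * L * δ + ζ) / η)
          ≤ (1 - η) * qq N (φ th) := mul_le_mul_of_nonneg_left hdiv h1η
      have h11 : (1 - η) * ((2 * L * δ + ζ) / η) ≤ (2 * L * δ + ζ) / η := by
        nlinarith
      have h12 : (1 - η) * (N.pay (some t) - (2 * L * δ + ζ) / η)
          = (1 - η) * N.pay (some t) - (1 - η) * ((2 * L * δ + ζ) / η) := by ring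
      linarith
  -- apply the integral transfer lemma
  have hg₀meas : Measurable fun t => if t ∈ box m H then (1 - η) * qq N t else 0 := by
    refine Measurable.ite measurableSet_box ?_ measurable_const
    exact measurable_const.mul ((measurable_pay_some N).max measurable_const)
  have hh₀meas : Measurable fun t => (1 - η) * qq N (φ t) := by
    have := hcomp (fun k => (1 - η) * qq N (lst.getD k z₀))
    exact this
  have h1η : 0 ≤ 1 - η := by linarith
  have hEnn : 0 ≤ (2 * L * min ε' (m * H) + ζ) / η := by
    have : 0 ≤ min ε' (m * H) := le_min hε'.le (by positivity)
    positivity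
  haveI := hμP; haveI := hνP
  have hmain : ∫ t, (if t ∈ box m H then (1 - η) * qq N t else 0) ∂μ
      ≤ (∫ t, (1 - η) * qq N (φ t) ∂ν) + (2 * L * min ε' (m * H) + ζ) / η + m * L * H * ε' := by
    refine prokhorov_integral_le μ ν hg₀meas hh₀meas hK hEnn hε' ?_ ?_ ?_ ?_
      measurableSet_box hνbox ?_ hprok
    · intro t
      split
      · exact mul_nonneg h1η (qq_nonneg N t)
      · exact le_refl 0
    · intro t
      split
      · rename_i ht
        calc (1 - η) * qq N t ≤ 1 * qq N t :=
              mul_le_mul_of_nonneg_right (by linarith) (qq_nonneg N t)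
        _ = qq N t := one_mul _
        _ ≤ m * L * H := qq_le hIR hv1 hK ht
      · exact hK
    · intro t
      exact mul_nonneg h1η (qq_nonneg N (φ t))
    · intro t
      calc (1 - η) * qq N (φ t) ≤ 1 * qq N (φ t) :=
            mul_le_mul_of_nonneg_right (by linarith) (qq_nonneg N (φ t))
      _ = qq N (φ t) := one_mul _
      _ ≤ m * L * H := qq_le hIR hv1 hK (hφ_box t)
    · intro t th hthS hd
      by_cases ht : t ∈ box m H
      · rw [if_pos ht]
        have h6 := htransfer t th ht hthS
        have hδle : (∑ j, |th j - t j|) ≤ min ε' (m * H) := by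
          refine le_min hd.le ?_
          calc (∑ j, |th j - t j|) ≤ ∑ _j : Fin m, H := by
                refine Finset.sum_le_sum fun j _ => ?_
                have h7 := ht j
                have h8 := hthS j
                rw [abs_le]
                constructor <;> [linarith [h7.1, h7.2, h8.1, h8.2];
                  linarith [h7.1, h7.2, h8.1, h8.2]]
          _ = m * H := by simp [mul_comm]
        have hmono : (2 * L * (∑ j, |th j - t j|) + ζ) / η
            ≤ (2 * L * min ε' (m * H) + ζ) / η := by
          gcongr
        linarith
      · rw [if_neg ht]
        have := mul_nonneg h1η (qq_nonneg N (φ th))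
        linarith
  -- integrability facts and conclusion
  have hh₀int : Integrable (fun t => (1 - η) * qq N (φ t)) ν := by
    refine Integrable.mono' (integrable_const (m * L * H)) hh₀meas.aestronglyMeasurable ?_
    refine Filter.Eventually.of_forall fun t => ?_
    rw [Real.norm_eq_abs, abs_of_nonneg (mul_nonneg h1η (qq_nonneg _ _))]
    calc (1 - η) * qq N (φ t) ≤ 1 * qq N (φ t) :=
          mul_le_mul_of_nonneg_right (by linarith) (qq_nonneg N (φ t))
    _ = qq N (φ t) := one_mul _
    _ ≤ m * L * H := qq_le hIR hv1 hK (hφ_box t)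
  have hRevNh : Rev Nh ν = (∫ t, (1 - η) * qq N (φ t) ∂ν) - ζ := by
    have heq : (fun t => Nh.pay (some t)) = fun t => ((1 - η) * qq N (φ t) - ζ) := rfl
    rw [Rev, heq, integral_sub hh₀int (integrable_const ζ), integral_const]
    simp
  have hglower : (1 - η) * Rev N μ
      ≤ ∫ t, (if t ∈ box m H then (1 - η) * qq N t else 0) ∂μ := by
    by_cases hint : Integrable (fun t => N.pay (some t)) μ
    · have hg₀int : Integrable (fun t => if t ∈ box m H then (1 - η) * qq N t else 0) μ := by
        refine Integrable.mono' (integrable_const (m * L * H)) hg₀meas.aestronglyMeasurable ?_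
        refine Filter.Eventually.of_forall fun t => ?_
        rw [Real.norm_eq_abs]
        split
        · rename_i ht
          rw [abs_of_nonneg (mul_nonneg h1η (qq_nonneg _ _))]
          calc (1 - η) * qq N t ≤ 1 * qq N t :=
                mul_le_mul_of_nonneg_right (by linarith) (qq_nonneg N t)
          _ = qq N t := one_mul _
          _ ≤ m * L * H := qq_le hIR hv1 hK ht
        · simpa using hK
      have heq : (1 - η) * Rev N μ = ∫ t, (1 - η) * N.pay (some t) ∂μ := by
        rw [Rev, integral_const_mul]
      rw [heq]
      refine integral_mono_ae (hint.const_mul _) hg₀int ?_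
      filter_upwards [box_ae hμbox] with t ht
      rw [if_pos ht]
      exact mul_le_mul_of_nonneg_left (le_max_left _ _) h1η
    · rw [Rev, integral_undef hint, mul_zero]
      refine integral_nonneg fun t => ?_
      dsimp only
      split
      · exact mul_nonneg h1η (qq_nonneg N _)
      · exact le_refl 0
  have hfinal : (1 - η) * Rev N μ - (2 * L * min ε' (m * H) + ζ) / η - m * L * H * ε' - ζ
      ≤ Rev Nh ν := by
    rw [hRevNh]
    linarith
  exact hfinal

end Stmt16Aux
namespace Stmt16Aux

lemma le_of_sq_le_sq {a b : ℝ} (ha : 0 ≤ a) (hb : 0 < b) (h : a^2 ≤ b^2) : a ≤ b := by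
  nlinarith

lemma min_add_le {a b d : ℝ} (hd : 0 ≤ d) : min (a + d) b ≤ min a b + d := by
  rcases le_total a b with h | h
  · rw [min_eq_left h]
    exact le_trans (min_le_left _ _) (by linarith)
  · rw [min_eq_right h]
    exact le_trans (min_le_right _ _) (by linarith)

end Stmt16Aux
set_option maxHeartbeats 2000000
open Stmt16Aux in
/-- single-bidder approximation-preserving Prokhorov robustness: there
are absolute constants `C₁`, `C₂` such that from any IC and IR single-bidder mechanism `M`
achieving a `c`-approximation to `OPT(D)`, one can construct an IC and IR mechanism `M̂`
(from `M` and `D` alone) such that for every distribution `D̂` on `[0,H]^m` with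
`‖D − D̂‖_P ≤ ε`: `Rev(M̂, D̂) ≥ c·(1 − √κ)·OPT(D̂) − C₂·(κ + (√(mLH) + 1)·√κ)`, where
`κ = C₁·(mLHε + mL√(Hε))`. -/
theorem stmt16 :
    ∃ C₁ C₂ : ℝ, 0 < C₁ ∧ 0 < C₂ ∧
      ∀ (m : ℕ) (H L ε c : ℝ), 0 < H → 0 < L → 0 < ε → 0 < c → c ≤ 1 →
      ∀ v : (Fin m → ℝ) → (Fin m → Bool) → ℝ,
        (∀ t x, (∀ j, t j ∈ Icc (0:ℝ) H) → 0 ≤ v t x) →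
        (∀ t x, (∀ j, t j ∈ Icc (0:ℝ) H) → v t x ≤ m * L * H) →
        (∀ t t' x, |v t x - v t' x| ≤ L * ∑ j, |t j - t' j|) →
      ∀ D : Measure (Fin m → ℝ), IsProbabilityMeasure D → suppBox H D →
      ∀ M : Mech m, IsIC H v M → IsIR H v M → c * OPT H v D ≤ Rev M D →
      ∃ Mhat : Mech m, IsIC H v Mhat ∧ IsIR H v Mhat ∧
        ∀ Dhat : Measure (Fin m → ℝ),
          IsProbabilityMeasure Dhat → suppBox H Dhat → ProkhorovLe D Dhat ε →
          c * (1 - Real.sqrt (C₁ * (m * L * H * ε + m * L * Real.sqrt (H * ε)))) *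
              OPT H v Dhat -
            C₂ * (C₁ * (m * L * H * ε + m * L * Real.sqrt (H * ε)) +
              (Real.sqrt (m * L * H) + 1) *
                Real.sqrt (C₁ * (m * L * H * ε + m * L * Real.sqrt (H * ε)))) ≤
          Rev Mhat Dhat := by
  classical
  refine ⟨1, 10, one_pos, by norm_num, ?_⟩
  intro m H L ε c hH hL hε hc hc1 v hv0 hv1 hlip D hD hDbox M hMIC hMIR hMrev
  haveI := hD
  have hK : (0:ℝ) ≤ ↑m * L * H := by positivity
  simp only [one_mul]
  by_cases hm : m = 0
  · -- degenerate case : no items, `OPT = 0`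
    subst hm
    refine ⟨triv 0, triv_IC, triv_IR hv0, ?_⟩
    intro Dhat hDhP hDhB _
    haveI := hDhP
    have h1 : OPT H v Dhat ≤ (0:ℕ) * L * H := opt_le hv0 hv1 hK hDhB
    have h2 : 0 ≤ OPT H v Dhat := opt_nonneg hv0 hv1 hK hDhB
    rw [rev_triv]
    have h3 : ((0:ℕ):ℝ) = 0 := by norm_num
    rw [h3] at h1 ⊢
    have h4 : OPT H v Dhat = 0 := le_antisymm (by linarith) h2
    rw [h4]
    simp [Real.sqrt_zero]
  -- now `m ≥ 1`
  have hm1 : (1:ℝ) ≤ (m:ℝ) := by exact_mod_cast Nat.one_le_iff_ne_zero.2 hm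
  have hm0 : (0:ℝ) < (m:ℝ) := by linarith
  set κ : ℝ := ↑m * L * H * ε + ↑m * L * Real.sqrt (H * ε) with hκdef
  have hsqrtHε : 0 < Real.sqrt (H * ε) := Real.sqrt_pos.2 (by positivity)
  have hκpos : 0 < κ := by positivity
  have hsq : 0 < Real.sqrt κ := Real.sqrt_pos.2 hκpos
  have hsqsq : Real.sqrt κ * Real.sqrt κ = κ := Real.mul_self_sqrt hκpos.le
  have hsqrt4 : Real.sqrt 4 = 2 := by
    rw [show (4:ℝ) = 2^2 by norm_num, Real.sqrt_sq (by norm_num)]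
  by_cases hbig : 4 ≤ κ
  · -- trivial case : the error term dominates
    refine ⟨triv m, triv_IC, triv_IR hv0, ?_⟩
    intro Dhat hDhP hDhB _
    haveI := hDhP
    have h2 : 2 ≤ Real.sqrt κ := by
      rw [← hsqrt4]
      exact Real.sqrt_le_sqrt hbig
    have hOPT0 : 0 ≤ OPT H v Dhat := opt_nonneg hv0 hv1 hK hDhB
    rw [rev_triv]
    have hsK : 0 ≤ Real.sqrt (↑m * L * H) := Real.sqrt_nonneg _
    have p1 : 0 ≤ c * OPT H v Dhat := mul_nonneg hc.le hOPT0
    have p2 : c * OPT H v Dhat * 2 ≤ c * OPT H v Dhat * Real.sqrt κ :=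
      mul_le_mul_of_nonneg_left h2 p1
    have p3 : 0 ≤ (Real.sqrt (↑m * L * H) + 1) * Real.sqrt κ :=
      mul_nonneg (by linarith) hsq.le
    nlinarith
  -- main case
  push_neg at hbig
  have hslt : Real.sqrt κ < 2 := by
    rw [← hsqrt4]
    exact Real.sqrt_lt_sqrt hκpos.le hbig
  set η : ℝ := Real.sqrt κ / 2 with hηdef
  have hη : 0 < η := by positivity
  have hη1 : η < 1 := by rw [hηdef]; linarith
  set ζ : ℝ := κ * Real.sqrt κ with hζdef
  have hζ : 0 < ζ := by positivity
  obtain ⟨Mh, hMhIC, hMhIR, hMhRev⟩ := core hH hL hη hη1.le hζ hv0 hv1 hlip M hMIC hMIR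
  refine ⟨Mh, hMhIC, hMhIR, ?_⟩
  intro Dhat hDhP hDhB hProk
  haveI := hDhP
  set X : ℝ := OPT H v Dhat with hXdef
  have hX0 : 0 ≤ X := opt_nonneg hv0 hv1 hK hDhB
  have hOPTD0 : 0 ≤ OPT H v D := opt_nonneg hv0 hv1 hK hDbox
  -- error terms
  set E₀ : ℝ := (2 * L * min ε (↑m * H) + ζ) / η + ↑m * L * H * ε + ζ with hE₀def
  set Cd : ℝ := 2 * L / η + ↑m * L * H + 1 with hCddef
  have hCd : 0 < Cd := by positivity
  have herr : ∀ d : ℝ, 0 < d →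
      (2 * L * min (ε + d) (↑m * H) + ζ) / η + ↑m * L * H * (ε + d) + ζ ≤ E₀ + Cd * d := by
    intro d hd
    have h1 : min (ε + d) (↑m * H) ≤ min ε (↑m * H) + d := min_add_le hd.le
    have h2 : (2 * L * min (ε + d) (↑m * H) + ζ) / η
        ≤ (2 * L * (min ε (↑m * H) + d) + ζ) / η := by gcongr
    have h3 : (2 * L * (min ε (↑m * H) + d) + ζ) / η
        = (2 * L * min ε (↑m * H) + ζ) / η + (2 * L / η) * d := by
      field_simp
      ring
    rw [hE₀def, hCddef]
    rw [h3] at h2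
    nlinarith
  have hE₀0 : 0 ≤ E₀ := by
    have hmin0 : 0 ≤ min ε (↑m * H) := le_min hε.le (by positivity)
    have : 0 ≤ (2 * L * min ε (↑m * H) + ζ) / η := by positivity
    rw [hE₀def]
    positivity
  -- step 1 & 2 for each d > 0
  have hstep : ∀ d : ℝ, 0 < d → c * (1 - 2 * η) * X - 2 * (E₀ + Cd * d) ≤ Rev Mh Dhat := by
    intro d hd
    set err : ℝ := (2 * L * min (ε + d) (↑m * H) + ζ) / η + ↑m * L * H * (ε + d) + ζ
      with herrdef
    have herr0 : 0 ≤ err := by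
      have hmin0 : 0 ≤ min (ε + d) (↑m * H) := le_min (by linarith) (by positivity)
      rw [herrdef]
      positivity
    have hεd : 0 < ε + d := by linarith
    -- revenue transfer for `M`
    have R1 : (1 - η) * Rev M D - (2 * L * min (ε + d) (↑m * H) + ζ) / η
        - ↑m * L * H * (ε + d) - ζ ≤ Rev Mh Dhat :=
      hMhRev D Dhat hD hDhP hDbox hDhB (ε + d) hεd
        (fun A hA => (hProk (ε + d) (by linarith) A hA).1)
    -- OPT transfer
    have R2 : (1 - η) * X ≤ OPT H v D + err := by
      have h1η : (0:ℝ) < 1 - η := by linarith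
      have hle : OPT H v Dhat ≤ (OPT H v D + err) / (1 - η) := by
        refine csSup_le ⟨0, zero_mem_revSet hv0⟩ ?_
        rintro r ⟨N, hNIC, hNIR, rfl⟩
        obtain ⟨Nh', hN1, hN2, hN3⟩ := core hH hL hη hη1.le hζ hv0 hv1 hlip N hNIC hNIR
        have h4 := hN3 Dhat D hDhP hD hDhB hDbox (ε + d) hεd
          (fun A hA => (hProk (ε + d) (by linarith) A hA).2)
        have h5 : Rev Nh' D ≤ OPT H v D := rev_le_opt hv1 hK hDbox hN1 hN2
        rw [le_div_iff₀ h1η]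
        have h6 : Rev N Dhat * (1 - η) = (1 - η) * Rev N Dhat := by ring
        rw [h6]
        rw [herrdef]
        linarith
      have := mul_le_mul_of_nonneg_left hle h1η.le
      rwa [mul_div_cancel₀ _ (ne_of_gt h1η)] at this
    -- chain
    have h1η0 : (0:ℝ) ≤ 1 - η := by linarith
    have e1 : (1 - η) * (c * OPT H v D) ≤ (1 - η) * Rev M D :=
      mul_le_mul_of_nonneg_left hMrev h1η0
    have e2 : c * ((1 - η) * X - err) ≤ c * OPT H v D :=
      mul_le_mul_of_nonneg_left (by linarith) hc.le
    have e3 : (1 - η) * (c * ((1 - η) * X - err)) ≤ (1 - η) * (c * OPT H v D) :=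
      mul_le_mul_of_nonneg_left e2 h1η0
    have p2 : c * (1 - η) * err ≤ err := by
      have hle1 : c * (1 - η) ≤ 1 := by nlinarith
      have h0 : 0 ≤ c * (1 - η) := mul_nonneg hc.le h1η0
      nlinarith
    have e5 : c * (1 - 2 * η) * X ≤ (1 - η) * (c * ((1 - η) * X - err)) + err := by
      have p1 : 0 ≤ c * X * (η * η) := by positivity
      nlinarith
    have herrE : err ≤ E₀ + Cd * d := herr d hd
    clear_value err X E₀ Cd ζ η κ
    linarith
  -- pass to the limit d → 0
  have hlim : c * (1 - 2 * η) * X - 2 * E₀ ≤ Rev Mh Dhat := by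
    by_contra hcon
    push_neg at hcon
    set G : ℝ := c * (1 - 2 * η) * X - 2 * E₀ - Rev Mh Dhat with hGdef
    have hG : 0 < G := by rw [hGdef]; linarith
    have hd₀ : 0 < G / (4 * Cd) := by positivity
    have := hstep _ hd₀
    have heq : 2 * (E₀ + Cd * (G / (4 * Cd))) = 2 * E₀ + G / 2 := by
      field_simp
      ring
    rw [heq] at this
    clear_value G X E₀ Cd ζ η κ
    linarith
  -- numeric bound on the error
  clear_value X E₀ Cd ζ η κ
  have hminε0 : 0 ≤ min ε (↑m * H) := le_min hε.le (by positivity)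
  have c1 : L * min ε (↑m * H) ≤ κ := by
    have hsqHε : Real.sqrt (H * ε) * Real.sqrt (H * ε) = H * ε := Real.mul_self_sqrt (by positivity)
    refine le_of_sq_le_sq (by positivity) hκpos ?_
    have hmin1 : min ε (↑m * H) ≤ ε := min_le_left _ _
    have hmin2 : min ε (↑m * H) ≤ ↑m * H := min_le_right _ _
    have hsq1 : min ε (↑m * H) * min ε (↑m * H) ≤ ε * (↑m * H) :=
      mul_le_mul hmin1 hmin2 hminε0 hε.le
    have hκ2 : (↑m * L * Real.sqrt (H * ε))^2 ≤ κ^2 := by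
      have h7 : 0 ≤ ↑m * L * Real.sqrt (H * ε) := by positivity
      have h8 : ↑m * L * Real.sqrt (H * ε) ≤ κ := by
        have hp : (0:ℝ) < ↑m * L * H * ε := by positivity
        rw [hκdef]
        linarith
      nlinarith
    have h9 : (↑m * L * Real.sqrt (H * ε))^2 = ↑m * ↑m * L^2 * (H * ε) := by
      rw [pow_two]
      linear_combination (↑m * ↑m * L^2) * hsqHε
    have h10 : (L * min ε (↑m * H))^2 = L^2 * (min ε (↑m * H) * min ε (↑m * H)) := by ring
    have h11 : L^2 * (min ε (↑m * H) * min ε (↑m * H)) ≤ L^2 * (ε * (↑m * H)) :=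
      mul_le_mul_of_nonneg_left hsq1 (sq_nonneg L)
    have h12 : ↑m * ↑m * L^2 * (H * ε) ≤ κ^2 := h9 ▸ hκ2
    have h13 : L^2 * (ε * (↑m * H)) ≤ ↑m * ↑m * L^2 * (H * ε) := by
      have hmm : 0 ≤ ↑m * (↑m - 1) * L^2 * H * ε :=
        mul_nonneg (mul_nonneg (mul_nonneg (mul_nonneg hm0.le (by linarith)) (sq_nonneg L))
          hH.le) hε.le
      nlinarith [hmm]
    linarith
  have c2 : ζ ≤ 2 * κ := by
    rw [hζdef]
    nlinarith [mul_lt_mul_of_pos_left hslt hκpos]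
  have c3 : ↑m * L * H * ε ≤ κ := by
    have h0 : (0:ℝ) ≤ ↑m * L * Real.sqrt (H * ε) := by positivity
    rw [hκdef]
    linarith
  have e₁ : (2 * L * min ε (↑m * H) + ζ) / η ≤ 4 * Real.sqrt κ + 2 * κ := by
    rw [hηdef, div_div_eq_mul_div]
    rw [div_le_iff₀ hsq]
    rw [hζdef]
    nlinarith [c1, hsqsq]
  have hE₀le : 2 * E₀ ≤ 8 * Real.sqrt κ + 10 * κ := by
    rw [hE₀def]
    linarith
  have hfin : 2 * E₀ ≤ 10 * (κ + (Real.sqrt (↑m * L * H) + 1) * Real.sqrt κ) := by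
    have hsK : 0 ≤ Real.sqrt (↑m * L * H) := Real.sqrt_nonneg _
    nlinarith [mul_nonneg hsK hsq.le, hsq.le, hκpos.le]
  have h2η : 1 - Real.sqrt κ = 1 - 2 * η := by rw [hηdef]; ring
  rw [h2η]
  linarith
end
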